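/- Let f be a strongly positive symplectic twist map of 𝕋^d×ℝ^d with bounded rate, let G ∈ C²(𝕋^d), and for ε ∈ ℝ let f_ε be the symplectic twist map whose generating function is S_ε(q,Q) := S(q,Q) + εG(q), where S is a generating function of f. Then: (i) for every ε₀ ≥ 0 there exists K(ε₀) ≥ 0 such that every C¹ Lagrangian graph invariant by some f_ε with |ε| ≤ ε₀ is Lipschitz with Lipschitz constant K(ε₀); (ii) if G is not constant, there exists Λ > 0 such that for every ε ∈ ℝ with |ε| ≥ Λ, the map f_ε does not admit any C¹ Lagrangian invariant graph. -/

import Mathlib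

open Function Set Filter Topology MeasureTheory

noncomputable section

/-- `ℝ^d` with the Euclidean structure. -/
abbrev Ed (d : ℕ) := EuclideanSpace ℝ (Fin d)
/-- `ℂ^d`. -/
abbrev Cd (d : ℕ) := EuclideanSpace ℂ (Fin d)

variable {d : ℕ}

/-- The real vector associated with an integer vector `m ∈ ℤ^d`. -/
def intVec (d : ℕ) (m : Fin d → ℤ) : Ed d := WithLp.toLp 2 (fun i => (m i : ℝ))

/-- The complex vector associated with an integer vector `m ∈ ℤ^d`. -/
def intVecC (d : ℕ) (m : Fin d → ℤ) : Cd d := WithLp.toLp 2 (fun i => (m i : ℂ))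

/-- The canonical embedding `ℝ^d → ℂ^d`. -/
def complexify (q : Ed d) : Cd d := WithLp.toLp 2 (fun i => (q i : ℂ))

/-- The standard pairing `⟨p, v⟩ = ∑ i, p i * v i` on `ℝ^d`. -/
def pairing (p v : Ed d) : ℝ := ∑ i, p i * v i

/-- The standard bilinear pairing on `ℂ^d`. -/
def pairingC (p v : Cd d) : ℂ := ∑ i, p i * v i

/-- `g` is a `C¹` diffeomorphism. -/
def IsC1Diffeo {X Y : Type*} [NormedAddCommGroup X] [NormedSpace ℝ X]
    [NormedAddCommGroup Y] [NormedSpace ℝ Y] (g : X → Y) : Prop :=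
  ContDiff ℝ 1 g ∧ ∃ ginv : Y → X, ContDiff ℝ 1 ginv ∧
    Function.LeftInverse ginv g ∧ Function.RightInverse ginv g

/-- `g` is a holomorphic diffeomorphism. -/
def IsHolDiffeo {X Y : Type*} [NormedAddCommGroup X] [NormedSpace ℂ X]
    [NormedAddCommGroup Y] [NormedSpace ℂ Y] (g : X → Y) : Prop :=
  Differentiable ℂ g ∧ ∃ ginv : Y → X, Differentiable ℂ ginv ∧
    Function.LeftInverse ginv g ∧ Function.RightInverse ginv g

/-- `F(q+m, p) = F(q, p) + (m, 0)` for all `m ∈ ℤ^d`: `F` is the lift of a map of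
`𝕋^d × ℝ^d`. -/
def IsZdLift (F : Ed d × Ed d → Ed d × Ed d) : Prop :=
  ∀ (m : Fin d → ℤ) (q p : Ed d),
    F (q + intVec d m, p) = ((F (q, p)).1 + intVec d m, (F (q, p)).2)

/-- `S` is a generating function for the lift `F`, i.e. `S(q+m, Q+m) = S(q, Q)` and
`P dQ - p dq = dS(q, Q)`; the latter means `∂₁S(q, Q(q,p)) = -p` and
`∂₂S(q, Q(q,p)) = P(q,p)`. -/
structure IsGenFun (F : Ed d × Ed d → Ed d × Ed d) (S : Ed d × Ed d → ℝ) : Prop where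
  periodic : ∀ (m : Fin d → ℤ) (q Q : Ed d), S (q + intVec d m, Q + intVec d m) = S (q, Q)
  dq : ∀ q p v : Ed d, fderiv ℝ (fun q' => S (q', (F (q, p)).1)) q v = -(pairing p v)
  dQ : ∀ q p v : Ed d, fderiv ℝ (fun Q' => S (q, Q')) (F (q, p)).1 v = pairing (F (q, p)).2 v

/-- `F : ℝ^d × ℝ^d → ℝ^d × ℝ^d` is a lift of a symplectic twist map of `𝕋^d × ℝ^d`
with generating function `S`. -/
structure IsSymplecticTwistLift (F : Ed d × Ed d → Ed d × Ed d)
    (S : Ed d × Ed d → ℝ) : Prop where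
  diffeo : IsC1Diffeo F
  lift : IsZdLift F
  twist : IsC1Diffeo (fun x : Ed d × Ed d => (x.1, (F x).1))
  genfun : IsGenFun F S

/-- The mixed second derivative `∂²_{qQ} S (q,Q) (v, v)`. -/
def mixedS (S : Ed d × Ed d → ℝ) (q Q v : Ed d) : ℝ :=
  fderiv ℝ (fun Q' => fderiv ℝ (fun q' => S (q', Q')) q v) Q v

/-- The symplectic twist map with `C²` generating function `S` is positive. -/
def PositiveGenFun (S : Ed d × Ed d → ℝ) : Prop :=
  ContDiff ℝ 2 S ∧ ∃ α : ℝ, 0 < α ∧ ∀ q Q v : Ed d, mixedS S q Q v ≤ -α * ‖v‖ ^ 2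

/-- The symplectic twist map with `C²` generating function `S` is strongly positive. -/
def StronglyPositiveGenFun (S : Ed d × Ed d → ℝ) : Prop :=
  ContDiff ℝ 2 S ∧ ∃ α β : ℝ, 0 < α ∧ 0 < β ∧
    ∀ q Q v : Ed d, -β * ‖v‖ ^ 2 ≤ mixedS S q Q v ∧ mixedS S q Q v ≤ -α * ‖v‖ ^ 2

/-- The second derivative `∂²_{qq} S (q, Q)` as a continuous bilinear map. -/
def hessqq (S : Ed d × Ed d → ℝ) (q Q : Ed d) : Ed d →L[ℝ] Ed d →L[ℝ] ℝ :=
  fderiv ℝ (fun q' => fderiv ℝ (fun q'' => S (q'', Q)) q') q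

/-- The second derivative `∂²_{QQ} S (q, Q)` as a continuous bilinear map. -/
def hessQQ (S : Ed d × Ed d → ℝ) (q Q : Ed d) : Ed d →L[ℝ] Ed d →L[ℝ] ℝ :=
  fderiv ℝ (fun Q' => fderiv ℝ (fun Q'' => S (q, Q'')) Q') Q

/-- The symplectic twist map with `C²` generating function `S` has bounded rate:
`‖∂²_{qq} S‖_∞ + ‖∂²_{QQ} S‖_∞ < ∞`. -/
def BoundedRateGenFun (S : Ed d × Ed d → ℝ) : Prop :=
  ContDiff ℝ 2 S ∧ ∃ C : ℝ, ∀ q Q : Ed d, ‖hessqq S q Q‖ + ‖hessQQ S q Q‖ ≤ C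

/-- `γ : ℝ^d → ℝ^d` is `ℤ^d`-periodic. -/
def ZdPeriodic (γ : Ed d → Ed d) : Prop :=
  ∀ (m : Fin d → ℤ) (q : Ed d), γ (q + intVec d m) = γ q

/-- A function `G : ℝ^d → ℝ` is `ℤ^d`-periodic, i.e. is a function on `𝕋^d`. -/
def ZdPeriodicFun (G : Ed d → ℝ) : Prop :=
  ∀ (m : Fin d → ℤ) (q : Ed d), G (q + intVec d m) = G q

/-- The graph of `γ` is Lagrangian: `∫₀¹ γ(ν(t))·ν'(t) dt = 0` for every `C¹` loop `ν`. -/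
def IsLagrangianGraph (γ : Ed d → Ed d) : Prop :=
  ∀ ν : ℝ → Ed d, ContDiff ℝ 1 ν → (∀ t : ℝ, ν (t + 1) = ν t) →
    ∫ t in (0:ℝ)..1, pairing (γ (ν t)) (deriv ν t) = 0

/-- The graph of `γ` is an `(m, n)`-periodic graph of `F`: `F^n(q, γ(q)) = (q+m, γ(q))`. -/
def IsPeriodicGraph (F : Ed d × Ed d → Ed d × Ed d) (m : Fin d → ℤ) (n : ℕ)
    (γ : Ed d → Ed d) : Prop :=
  ∀ q : Ed d, F^[n] (q, γ q) = (q + intVec d m, γ q)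

/-- `m ∈ ℤ^d` and `n ∈ ℕ` are coprime. -/
def CoprimeVec (m : Fin d → ℤ) (n : ℕ) : Prop :=
  Nat.gcd (Finset.univ.gcd fun i => (m i).natAbs) n = 1

/-- The graph of `γ`, as a subset of `ℝ^d × ℝ^d`. -/
def graphSet (γ : Ed d → Ed d) : Set (Ed d × Ed d) := {x : Ed d × Ed d | x.2 = γ x.1}

/-- `F` admits a Lipschitz Lagrangian `(m,n)`-periodic graph. -/
def HasLipLagPeriodicGraph (F : Ed d × Ed d → Ed d × Ed d) (m : Fin d → ℤ) (n : ℕ) : Prop :=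
  ∃ γ : Ed d → Ed d, (∃ K : NNReal, LipschitzWith K γ) ∧ ZdPeriodic γ ∧
    IsLagrangianGraph γ ∧ IsPeriodicGraph F m n γ

/-- The symplectic twist map lifted by `F` satisfies the analyticity property: there is a
holomorphic diffeomorphism of `ℂ^d × ℂ^d` extending `F`, satisfying the twist condition
and admitting a holomorphic generating function. -/
def SatisfiesAnalyticityProperty (F : Ed d × Ed d → Ed d × Ed d) : Prop :=
  ∃ Fc : Cd d × Cd d → Cd d × Cd d,
    IsHolDiffeo Fc ∧
    (∀ q p : Ed d, Fc (complexify q, complexify p)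
        = (complexify (F (q, p)).1, complexify (F (q, p)).2)) ∧
    IsHolDiffeo (fun x : Cd d × Cd d => (x.1, (Fc x).1)) ∧
    ∃ Sc : Cd d × Cd d → ℂ, Differentiable ℂ Sc ∧
      (∀ (m : Fin d → ℤ) (q Q : Cd d), Sc (q + intVecC d m, Q + intVecC d m) = Sc (q, Q)) ∧
      (∀ q p v : Cd d, fderiv ℂ (fun q' => Sc (q', (Fc (q, p)).1)) q v = -(pairingC p v)) ∧
      (∀ q p v : Cd d,
        fderiv ℂ (fun Q' => Sc (q, Q')) (Fc (q, p)).1 v = pairingC (Fc (q, p)).2 v)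

/-- `G : 𝕋^d → ℝ` admits a holomorphic extension to `ℂ^d`. -/
def HasHolomorphicExtension (G : Ed d → ℝ) : Prop :=
  ∃ Gc : Cd d → ℂ, Differentiable ℂ Gc ∧ ∀ q : Ed d, Gc (complexify q) = (G q : ℂ)

/-- `F` is the lift of a completely integrable map `f(q,p) = (q + ∇ℓ₀(p), p)` where
`ℓ₀` is `C²` and `∇ℓ₀` is a `C¹` diffeomorphism of `ℝ^d`. -/
def CompletelyIntegrableLift (F : Ed d × Ed d → Ed d × Ed d) : Prop :=
  ∃ (ℓ : Ed d → ℝ) (g : Ed d → Ed d), ContDiff ℝ 2 ℓ ∧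
    (∀ p v : Ed d, fderiv ℝ ℓ p v = pairing (g p) v) ∧
    IsC1Diffeo g ∧ ∀ q p : Ed d, F (q, p) = (q + g p, p)

/-- The `ν`-th Fourier coefficient of a `ℤ^d`-periodic function `G : ℝ^d → ℝ`. -/
def fourierCoeffT (G : Ed d → ℝ) (ν : Fin d → ℤ) : ℂ :=
  ∫ q in {q : Ed d | ∀ i, q i ∈ Set.Icc (0:ℝ) 1},
    (G q : ℂ) * Complex.exp (-(2 * Real.pi * Complex.I) * ∑ i, (ν i : ℂ) * (q i : ℂ))

/-- The sequence `(x_j)_{j ∈ ℤ}` is action-minimizing for the generating function `S`. -/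
def IsMinimizingSeq (S : Ed d × Ed d → ℝ) (x : ℤ → Ed d) : Prop :=
  ∀ (k : ℤ) (N : ℕ) (w : ℕ → Ed d), w 0 = x k → w N = x (k + N) →
    ∑ j ∈ Finset.range N, S (x (k + j), x (k + j + 1)) ≤
      ∑ j ∈ Finset.range N, S (w j, w (j + 1))

/-- `x : ℤ → ℝ^d × ℝ^d` is a full orbit of `F`. -/
def IsFullOrbit (F : Ed d × Ed d → Ed d × Ed d) (x : ℤ → Ed d × Ed d) : Prop :=
  ∀ j : ℤ, x (j + 1) = F (x j)

/-- The orbit of `a` under `F` is action-minimizing (its projection is a minimizing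
sequence). -/
def OrbitMinimizing (F : Ed d × Ed d → Ed d × Ed d) (S : Ed d × Ed d → ℝ)
    (a : Ed d × Ed d) : Prop :=
  ∃ x : ℤ → Ed d × Ed d, x 0 = a ∧ IsFullOrbit F x ∧ IsMinimizingSeq S fun j => (x j).1

/-- The superlinearity condition `S(q,Q)/‖Q-q‖ → ∞` as `‖Q-q‖ → ∞`. -/
def SuperlinearGenFun (S : Ed d × Ed d → ℝ) : Prop :=
  ∀ A : ℝ, ∃ R : ℝ, ∀ q Q : Ed d, R ≤ ‖Q - q‖ → A * ‖Q - q‖ ≤ S (q, Q)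

/-- The determinant of `∂_p (π₁ ∘ F^n) (q, p)`. -/
def twistDet (F : Ed d × Ed d → Ed d × Ed d) (n : ℕ) (q p : Ed d) : ℝ :=
  LinearMap.det ((fderiv ℝ (fun p' => (F^[n] (q, p')).1) p : Ed d →L[ℝ] Ed d)
    : Ed d →ₗ[ℝ] Ed d)

/-- The set `A ⊆ ℝ` is infinite with points accumulating to `0`. -/
def InfiniteAccumulatingAtZero (A : Set ℝ) : Prop :=
  A.Infinite ∧ ∀ δ : ℝ, 0 < δ → ∃ ε ∈ A, ε ≠ 0 ∧ |ε| < δ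


/-! ### Auxiliary material for the proof of statement19 -/

section AuxST19

open RealInnerProductSpace intervalIntegral

variable {d : ℕ}

lemma pairing_eq_inner (p v : Ed d) : pairing p v = ⟪p, v⟫ := by
  simp [pairing, PiLp.inner_apply, RCLike.inner_apply, conj_trivial]
  exact Finset.sum_congr rfl fun _ _ => mul_comm _ _

lemma st19_intVec_neg (m : Fin d → ℤ) : intVec d (fun i => -(m i)) = - intVec d m := by
  ext i
  simp [intVec]

/-- Reduction to a fundamental domain. -/
lemma exists_intVec_norm_le (q : Ed d) :
    ∃ m : Fin d → ℤ, ‖q + intVec d m‖ ≤ (d : ℝ) + 1 := by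
  refine ⟨fun i => -⌊q i⌋, ?_⟩
  have hcoord : ∀ i, (q + intVec d (fun i => -⌊q i⌋)) i = Int.fract (q i) := by
    intro i
    have h : (q + intVec d (fun i => -⌊q i⌋)) i = q i + ((-⌊q i⌋ : ℤ) : ℝ) := by simp [intVec]
    rw [h, Int.fract]
    push_cast
    ring
  have h1 : ‖q + intVec d (fun i => -⌊q i⌋)‖ ≤ Real.sqrt d := by
    rw [EuclideanSpace.norm_eq]
    apply Real.sqrt_le_sqrt
    have : ∀ i, ‖(q + intVec d (fun i => -⌊q i⌋)) i‖ ^ 2 ≤ 1 := by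
      intro i
      rw [hcoord i]
      have h0 := Int.fract_nonneg (q i)
      have h1 := Int.fract_lt_one (q i)
      rw [Real.norm_eq_abs, sq_abs]
      nlinarith
    calc ∑ i, ‖(q + intVec d (fun i => -⌊q i⌋)) i‖ ^ 2 ≤ ∑ _i : Fin d, (1:ℝ) :=
          Finset.sum_le_sum fun i _ => this i
      _ = d := by simp
  refine h1.trans ?_
  have : Real.sqrt d ≤ Real.sqrt (((d:ℝ)+1)^2) := by
    apply Real.sqrt_le_sqrt
    nlinarith [Nat.cast_nonneg (α := ℝ) d]
  rw [Real.sqrt_sq (by positivity)] at this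
  exact this

/-- A continuous `ℤ^d`-periodic map is bounded. -/
lemma bounded_of_periodic {Y : Type*} [SeminormedAddGroup Y]
    {f : Ed d → Y} (hf : Continuous f)
    (h : ∀ (m : Fin d → ℤ) (q : Ed d), f (q + intVec d m) = f q) :
    ∃ M : ℝ, 0 ≤ M ∧ ∀ q, ‖f q‖ ≤ M := by
  obtain ⟨M, hM⟩ :=
    (isCompact_closedBall (0 : Ed d) ((d:ℝ)+1)).exists_bound_of_continuousOn hf.continuousOn
  refine ⟨max M 0, le_max_right _ _, fun q => ?_⟩
  obtain ⟨m, hm⟩ := exists_intVec_norm_le q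
  have hmem : q + intVec d m ∈ Metric.closedBall (0 : Ed d) ((d:ℝ)+1) := by
    simpa [Metric.mem_closedBall, dist_zero_right] using hm
  calc ‖f q‖ = ‖f (q + intVec d m)‖ := by rw [h m q]
    _ ≤ M := hM _ hmem
    _ ≤ max M 0 := le_max_left _ _

/-- Translation invariance of `fderiv` for periodic maps. -/
lemma periodic_fderiv {X Y : Type*} [NormedAddCommGroup X] [NormedSpace ℝ X]
    [NormedAddCommGroup Y] [NormedSpace ℝ Y]
    {f : X → Y} (hf : Differentiable ℝ f) {c : X} (h : ∀ x, f (x + c) = f x) (x : X) :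
    fderiv ℝ f (x + c) = fderiv ℝ f x := by
  have ht : HasFDerivAt (fun y : X => y + c) (ContinuousLinearMap.id ℝ X) x :=
    (hasFDerivAt_id x).add_const c
  have h1 : HasFDerivAt (fun y => f (y + c))
      ((fderiv ℝ f (x + c)).comp (ContinuousLinearMap.id ℝ X)) x :=
    (hf (x + c)).hasFDerivAt.comp x ht
  rw [ContinuousLinearMap.comp_id] at h1
  have h2 : (fun y => f (y + c)) = f := funext h
  rw [h2] at h1
  exact (h1.fderiv).symm

/-- Line derivative of a differentiable map. -/
lemma hasDerivAt_line {X Y : Type*} [NormedAddCommGroup X] [NormedSpace ℝ X]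
    [NormedAddCommGroup Y] [NormedSpace ℝ Y] {f : X → Y} (hf : Differentiable ℝ f)
    (z w : X) (t : ℝ) : HasDerivAt (fun s : ℝ => f (z + s • w)) (fderiv ℝ f (z + t • w) w) t := by
  have hc : HasDerivAt (fun s : ℝ => z + s • w) w t := by
    simpa using ((hasDerivAt_id t).smul_const w).const_add z
  exact (hf _).hasFDerivAt.comp_hasDerivAt t hc

/-- Second derivative along a line, applied to a fixed vector. -/
lemma hasDerivAt_fderiv_line {X : Type*} [NormedAddCommGroup X] [NormedSpace ℝ X]
    {f : X → ℝ} (hf : ContDiff ℝ 2 f) (z w vec : X) (t : ℝ) :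
    HasDerivAt (fun s : ℝ => (fderiv ℝ f (z + s • w)) vec)
      ((fderiv ℝ (fderiv ℝ f) (z + t • w) w) vec) t := by
  have hd : Differentiable ℝ (fderiv ℝ f) :=
    (hf.fderiv_right (m := 1) (by norm_num)).differentiable one_ne_zero
  have h1 := (hasDerivAt_line hd z w t).clm_apply (hasDerivAt_const t vec)
  simpa using h1

/-- Operator norm bound for symmetric operators with bounded quadratic form. -/
lemma opNorm_le_of_symmetric {A : Ed d →L[ℝ] Ed d} {K : ℝ} (hK : 0 ≤ K)
    (hsym : ∀ v w : Ed d, ⟪A v, w⟫ = ⟪A w, v⟫)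
    (hbound : ∀ v : Ed d, |⟪A v, v⟫| ≤ K * ‖v‖^2) : ‖A‖ ≤ K := by
  have key : ∀ v w : Ed d, ⟪A v, w⟫ ≤ K / 2 * (‖v‖^2 + ‖w‖^2) := by
    intro v w
    have e1 : ⟪A (v+w), v+w⟫ = ⟪A v, v⟫ + ⟪A v, w⟫ + ⟪A w, v⟫ + ⟪A w, w⟫ := by
      simp only [map_add, inner_add_left, inner_add_right]
      ring
    have e2 : ⟪A (v-w), v-w⟫ = ⟪A v, v⟫ - ⟪A v, w⟫ - ⟪A w, v⟫ + ⟪A w, w⟫ := by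
      simp only [map_sub, inner_sub_left, inner_sub_right]
      ring
    have h4 : ⟪A v, w⟫ = (⟪A (v+w), v+w⟫ - ⟪A (v-w), v-w⟫) / 4 := by
      rw [e1, e2, hsym w v]; ring
    have b1 := (abs_le.mp (hbound (v+w))).2
    have b2 := (abs_le.mp (hbound (v-w))).1
    have par : ‖v+w‖^2 + ‖v-w‖^2 = 2*‖v‖^2 + 2*‖w‖^2 := by
      have p1 := norm_add_sq_real v w
      have p2 := norm_sub_sq_real v w
      linarith
    rw [h4]
    nlinarith
  have key2 : ∀ v w : Ed d, ⟪A v, w⟫ ≤ K * ‖v‖ * ‖w‖ := by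
    intro v w
    rcases eq_or_ne v 0 with hv | hv
    · simp [hv]
    rcases eq_or_ne w 0 with hw | hw
    · simp [hw]
    have hvn : 0 < ‖v‖ := norm_pos_iff.mpr hv
    have hwn : 0 < ‖w‖ := norm_pos_iff.mpr hw
    set t := Real.sqrt (‖w‖ / ‖v‖) with ht
    have htpos : 0 < t := Real.sqrt_pos.mpr (by positivity)
    have ht2 : t^2 = ‖w‖ / ‖v‖ := Real.sq_sqrt (by positivity)
    have hkey := key (t • v) (t⁻¹ • w)
    have hL : ⟪A (t • v), t⁻¹ • w⟫ = ⟪A v, w⟫ := by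
      rw [A.map_smul, real_inner_smul_left, real_inner_smul_right]
      field_simp
    have hn1 : ‖t • v‖^2 = t^2 * ‖v‖^2 := by
      rw [norm_smul, Real.norm_eq_abs, mul_pow, sq_abs]
    have hn2 : ‖t⁻¹ • w‖^2 = (t^2)⁻¹ * ‖w‖^2 := by
      rw [norm_smul, Real.norm_eq_abs, mul_pow, sq_abs, inv_pow]
    rw [hL, hn1, hn2, ht2] at hkey
    have hx : ‖w‖ / ‖v‖ * ‖v‖^2 = ‖w‖ * ‖v‖ := by
      field_simp
    have hy : (‖w‖ / ‖v‖)⁻¹ * ‖w‖^2 = ‖v‖ * ‖w‖ := by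
      field_simp
    calc ⟪A v, w⟫ ≤ _ := hkey
      _ = K * ‖v‖ * ‖w‖ := by rw [hx, hy]; ring
  refine A.opNorm_le_bound hK fun v => ?_
  rcases eq_or_ne (A v) 0 with hAv | hAv
  · rw [hAv]; simp; positivity
  have h1 : ‖A v‖^2 = ⟪A v, A v⟫ := (real_inner_self_eq_norm_sq _).symm
  have h2 := key2 v (A v)
  have h3 : 0 < ‖A v‖ := norm_pos_iff.mpr hAv
  nlinarith

/-- Second-derivative test at a global minimum (one-dimensional, via MVT). -/
lemma deriv2_nonneg_of_min {φ ρ : ℝ → ℝ} {ρ' : ℝ}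
    (hφ : ∀ t, HasDerivAt φ (ρ t) t) (hmin : ∀ t, φ 0 ≤ φ t) (hρ0 : ρ 0 = 0)
    (hρ' : HasDerivAt ρ ρ' 0) : 0 ≤ ρ' := by
  by_contra hneg
  push_neg at hneg
  have hlo := (hasDerivAt_iff_isLittleO.mp hρ')
  rw [Asymptotics.isLittleO_iff] at hlo
  have hc : (0:ℝ) < -ρ'/2 := by linarith
  have hev := hlo hc
  rw [Metric.eventually_nhds_iff] at hev
  obtain ⟨δ, hδ, hb⟩ := hev
  set b := δ/2 with hbdef
  have hbpos : 0 < b := by positivity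
  obtain ⟨ξ, hξ, hslope⟩ := exists_hasDerivAt_eq_slope φ ρ hbpos
    (fun t _ => (hφ t).continuousAt.continuousWithinAt) (fun x _ => hφ x)
  have hξ0 : 0 < ξ := hξ.1
  have hξb : ξ < b := hξ.2
  have hdist : dist ξ 0 < δ := by
    rw [Real.dist_eq, sub_zero, abs_of_pos hξ0]; linarith
  have hbd := hb hdist
  rw [hρ0] at hbd
  simp only [sub_zero, smul_eq_mul] at hbd
  have habs : |ρ ξ - ξ * ρ'| ≤ -ρ'/2 * |ξ| := by
    simpa [Real.norm_eq_abs] using hbd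
  rw [abs_of_pos hξ0] at habs
  have hneg2 : ρ ξ < 0 := by
    have := (abs_le.mp habs).2
    nlinarith
  have hpos2 : 0 ≤ ρ ξ := by
    rw [hslope, sub_zero]
    apply div_nonneg _ hbpos.le
    linarith [hmin b]
  linarith

/-- One-dimensional estimate: a bounded function with second derivative bounded below
has a controlled first derivative. -/
lemma sq_deriv_le_of_bounded {f f' f'' : ℝ → ℝ} {B M : ℝ}
    (hf : ∀ s, HasDerivAt f (f' s) s) (hf' : ∀ s, HasDerivAt f' (f'' s) s)
    (hB : ∀ s, -B ≤ f'' s) (hBpos : 0 < B) (hM : ∀ s, |f s| ≤ M) (h0 : 0 ≤ f' 0) :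
    (f' 0)^2 ≤ 4 * M * B := by
  have hmono : ∀ s : ℝ, 0 ≤ s → f' 0 - B * s ≤ f' s := by
    intro s hs
    have hζ : ∀ t : ℝ, HasDerivAt (fun t => f' t + B * t) (f'' t + B) t := by
      intro t
      have h2 : HasDerivAt (fun t : ℝ => B * t) B t := by
        simpa using (hasDerivAt_id t).const_mul B
      exact (hf' t).add h2
    have hm : Monotone (fun t => f' t + B * t) :=
      monotone_of_deriv_nonneg (fun t => (hζ t).differentiableAt)
        (fun t => by rw [(hζ t).deriv]; linarith [hB t])
    have := hm hs
    simp only at this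
    linarith
  set η := fun s : ℝ => f s - f 0 - f' 0 * s + B/2 * s^2 with hη
  have hηd : ∀ s : ℝ, HasDerivAt η (f' s - f' 0 + B * s) s := by
    intro s
    have h1 : HasDerivAt (fun s : ℝ => f' 0 * s) (f' 0) s := by
      simpa using (hasDerivAt_id s).const_mul (f' 0)
    have h2 : HasDerivAt (fun s : ℝ => B/2 * s^2) (B/2 * (2 * s)) s := by
      have := (hasDerivAt_pow 2 s).const_mul (B/2)
      simpa using this
    have := (((hf s).sub_const (f 0)).sub h1).add h2
    exact this.congr_deriv (by ring)
  have hmono2 : MonotoneOn η (Set.Ici 0) := by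
    apply monotoneOn_of_deriv_nonneg (convex_Ici 0)
      (fun s _ => (hηd s).continuousAt.continuousWithinAt)
      (fun s _ => (hηd s).differentiableAt.differentiableWithinAt)
    intro s hs
    rw [interior_Ici] at hs
    rw [(hηd s).deriv]
    have := hmono s hs.le
    linarith
  set s0 := f' 0 / B with hs0def
  have hs0 : (0:ℝ) ≤ s0 := div_nonneg h0 hBpos.le
  have hev := hmono2 Set.self_mem_Ici (Set.mem_Ici.mpr hs0) hs0
  have hη0 : η 0 = 0 := by simp [hη]
  rw [hη0] at hev
  have e1 : f' 0 * s0 = (f' 0)^2 / B := by rw [hs0def]; ring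
  have e2 : B/2 * s0^2 = (f' 0)^2/(2*B) := by
    rw [hs0def]; field_simp
  have hv : 0 ≤ f s0 - f 0 - (f' 0)^2 / B + (f' 0)^2/(2*B) := by
    have : η s0 = f s0 - f 0 - f' 0 * s0 + B/2 * s0^2 := rfl
    rw [this, e1, e2] at hev
    linarith
  have hb1 := abs_le.mp (hM s0)
  have hb2 := abs_le.mp (hM 0)
  have hq : (f' 0)^2 / B - (f' 0)^2/(2*B) = (f' 0)^2/(2*B) := by
    field_simp
    ring
  have : (f' 0)^2/(2*B) ≤ 2*M := by linarith
  rw [div_le_iff₀ (by positivity)] at this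
  linarith

end AuxST19

section AuxST19b

open RealInnerProductSpace

variable {d : ℕ} {S : Ed d × Ed d → ℝ}

lemma hasFDerivAt_pair_left (y x : Ed d) :
    HasFDerivAt (fun q' : Ed d => ((q', y) : Ed d × Ed d))
      (ContinuousLinearMap.inl ℝ (Ed d) (Ed d)) x := by
  have h : HasFDerivAt (fun q' : Ed d => ((q', y) : Ed d × Ed d))
      ((ContinuousLinearMap.id ℝ (Ed d)).prod (0 : Ed d →L[ℝ] Ed d)) x :=
    (hasFDerivAt_id x).prodMk (hasFDerivAt_const y x)
  have he : (ContinuousLinearMap.id ℝ (Ed d)).prod (0 : Ed d →L[ℝ] Ed d)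
      = ContinuousLinearMap.inl ℝ (Ed d) (Ed d) := by
    refine ContinuousLinearMap.ext fun v => ?_
    simp
  rwa [he] at h

lemma hasFDerivAt_pair_right (x y : Ed d) :
    HasFDerivAt (fun Q' : Ed d => ((x, Q') : Ed d × Ed d))
      (ContinuousLinearMap.inr ℝ (Ed d) (Ed d)) y := by
  have h : HasFDerivAt (fun Q' : Ed d => ((x, Q') : Ed d × Ed d))
      ((0 : Ed d →L[ℝ] Ed d).prod (ContinuousLinearMap.id ℝ (Ed d))) y :=
    (hasFDerivAt_const x y).prodMk (hasFDerivAt_id y)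
  have he : (0 : Ed d →L[ℝ] Ed d).prod (ContinuousLinearMap.id ℝ (Ed d))
      = ContinuousLinearMap.inr ℝ (Ed d) (Ed d) := by
    refine ContinuousLinearMap.ext fun v => ?_
    simp
  rwa [he] at h

lemma hasFDerivAt_S_left (hS : ContDiff ℝ 2 S) (x y : Ed d) :
    HasFDerivAt (fun q' : Ed d => S (q', y))
      ((fderiv ℝ S (x, y)).comp (ContinuousLinearMap.inl ℝ (Ed d) (Ed d))) x :=
  ((hS.differentiable (by norm_num) (x, y)).hasFDerivAt).comp x (hasFDerivAt_pair_left y x)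

lemma hasFDerivAt_S_right (hS : ContDiff ℝ 2 S) (x y : Ed d) :
    HasFDerivAt (fun Q' : Ed d => S (x, Q'))
      ((fderiv ℝ S (x, y)).comp (ContinuousLinearMap.inr ℝ (Ed d) (Ed d))) y :=
  ((hS.differentiable (by norm_num) (x, y)).hasFDerivAt).comp y (hasFDerivAt_pair_right x y)

lemma D1_clm (hS : ContDiff ℝ 2 S) (x y : Ed d) :
    fderiv ℝ (fun q' => S (q', y)) x
      = (fderiv ℝ S (x, y)).comp (ContinuousLinearMap.inl ℝ (Ed d) (Ed d)) :=
  (hasFDerivAt_S_left hS x y).fderiv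

lemma D2_clm (hS : ContDiff ℝ 2 S) (x y : Ed d) :
    fderiv ℝ (fun Q' => S (x, Q')) y
      = (fderiv ℝ S (x, y)).comp (ContinuousLinearMap.inr ℝ (Ed d) (Ed d)) :=
  (hasFDerivAt_S_right hS x y).fderiv

lemma DS_hasFDerivAt (hS : ContDiff ℝ 2 S) (z : Ed d × Ed d) :
    HasFDerivAt (fderiv ℝ S) (fderiv ℝ (fderiv ℝ S) z) z :=
  (((hS.fderiv_right (m := 1) (by norm_num)).differentiable one_ne_zero) z).hasFDerivAt

lemma schwarzS (hS : ContDiff ℝ 2 S) (z a b : Ed d × Ed d) :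
    fderiv ℝ (fderiv ℝ S) z a b = fderiv ℝ (fderiv ℝ S) z b a :=
  second_derivative_symmetric
    (fun y => ((hS.differentiable (by norm_num)) y).hasFDerivAt) (DS_hasFDerivAt hS z) a b

lemma hasFDerivAt_DSpartial_right (hS : ContDiff ℝ 2 S) (q Q : Ed d) :
    HasFDerivAt (fun Q' : Ed d => fderiv ℝ S (q, Q'))
      ((fderiv ℝ (fderiv ℝ S) (q, Q)).comp (ContinuousLinearMap.inr ℝ (Ed d) (Ed d))) Q :=
  (DS_hasFDerivAt hS (q, Q)).comp Q (hasFDerivAt_pair_right q Q)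

lemma hasFDerivAt_DSpartial_left (hS : ContDiff ℝ 2 S) (q Q : Ed d) :
    HasFDerivAt (fun q' : Ed d => fderiv ℝ S (q', Q))
      ((fderiv ℝ (fderiv ℝ S) (q, Q)).comp (ContinuousLinearMap.inl ℝ (Ed d) (Ed d))) q :=
  (DS_hasFDerivAt hS (q, Q)).comp q (hasFDerivAt_pair_left Q q)

lemma mixedS_eq (hS : ContDiff ℝ 2 S) (q Q v : Ed d) :
    mixedS S q Q v = fderiv ℝ (fderiv ℝ S) (q, Q) (0, v) (v, 0) := by
  have hfun : (fun Q' => fderiv ℝ (fun q' => S (q', Q')) q v)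
      = (fun Q' => (fderiv ℝ S (q, Q')) ((v, 0) : Ed d × Ed d)) := by
    funext Q'
    rw [D1_clm hS]
    simp
  rw [mixedS, hfun]
  have h1 := (hasFDerivAt_DSpartial_right hS q Q).clm_apply
    (hasFDerivAt_const ((v, 0) : Ed d × Ed d) Q)
  rw [h1.fderiv]
  simp

lemma hessQQ_apply (hS : ContDiff ℝ 2 S) (q Q v : Ed d) :
    (hessQQ S q Q v) v = fderiv ℝ (fderiv ℝ S) (q, Q) (0, v) (0, v) := by
  set ψ : ((Ed d × Ed d) →L[ℝ] ℝ) →L[ℝ] (Ed d →L[ℝ] ℝ) :=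
    (ContinuousLinearMap.compSL (Ed d) (Ed d × Ed d) ℝ (RingHom.id ℝ) (RingHom.id ℝ)).flip
      (ContinuousLinearMap.inr ℝ (Ed d) (Ed d)) with hψ
  have hfun : (fun Q' : Ed d => fderiv ℝ (fun Q'' => S (q, Q'')) Q')
      = fun Q' => ψ (fderiv ℝ S (q, Q')) := by
    funext Q'
    rw [D2_clm hS]
    simp [hψ]
  have h2 : HasFDerivAt (fun Q' : Ed d => ψ (fderiv ℝ S (q, Q')))
      (ψ.comp ((fderiv ℝ (fderiv ℝ S) (q, Q)).comp (ContinuousLinearMap.inr ℝ (Ed d) (Ed d)))) Q :=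
    ψ.hasFDerivAt.comp Q (hasFDerivAt_DSpartial_right hS q Q)
  have h3 : hessQQ S q Q
      = ψ.comp ((fderiv ℝ (fderiv ℝ S) (q, Q)).comp (ContinuousLinearMap.inr ℝ (Ed d) (Ed d))) := by
    rw [hessQQ, hfun]
    exact h2.fderiv
  rw [h3]
  simp [hψ]

lemma hessqq_apply (hS : ContDiff ℝ 2 S) (q Q v : Ed d) :
    (hessqq S q Q v) v = fderiv ℝ (fderiv ℝ S) (q, Q) (v, 0) (v, 0) := by
  set ψ : ((Ed d × Ed d) →L[ℝ] ℝ) →L[ℝ] (Ed d →L[ℝ] ℝ) :=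
    (ContinuousLinearMap.compSL (Ed d) (Ed d × Ed d) ℝ (RingHom.id ℝ) (RingHom.id ℝ)).flip
      (ContinuousLinearMap.inl ℝ (Ed d) (Ed d)) with hψ
  have hfun : (fun q' : Ed d => fderiv ℝ (fun q'' => S (q'', Q)) q')
      = fun q' => ψ (fderiv ℝ S (q', Q)) := by
    funext q'
    rw [D1_clm hS]
    simp [hψ]
  have h2 : HasFDerivAt (fun q' : Ed d => ψ (fderiv ℝ S (q', Q)))
      (ψ.comp ((fderiv ℝ (fderiv ℝ S) (q, Q)).comp (ContinuousLinearMap.inl ℝ (Ed d) (Ed d)))) q :=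
    ψ.hasFDerivAt.comp q (hasFDerivAt_DSpartial_left hS q Q)
  have h3 : hessqq S q Q
      = ψ.comp ((fderiv ℝ (fderiv ℝ S) (q, Q)).comp (ContinuousLinearMap.inl ℝ (Ed d) (Ed d))) := by
    rw [hessqq, hfun]
    exact h2.fderiv
  rw [h3]
  simp [hψ]

lemma D1_strong_mono (hS : ContDiff ℝ 2 S) {α : ℝ}
    (hα : ∀ q Q v, mixedS S q Q v ≤ -α * ‖v‖^2) (q Q Q' : Ed d) :
    fderiv ℝ S (q, Q) (Q - Q', 0) - fderiv ℝ S (q, Q') (Q - Q', 0) ≤ -α * ‖Q - Q'‖^2 := by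
  set w := Q - Q' with hwdef
  have hζ : ∀ t : ℝ, HasDerivAt
      (fun t : ℝ => fderiv ℝ S (((q, Q') : Ed d × Ed d) + t • (((0 : Ed d), w) : Ed d × Ed d)) ((w, 0) : Ed d × Ed d))
      ((fderiv ℝ (fderiv ℝ S) (((q, Q') : Ed d × Ed d) + t • ((0, w) : Ed d × Ed d)) ((0, w) : Ed d × Ed d)) ((w, 0) : Ed d × Ed d)) t :=
    fun t => hasDerivAt_fderiv_line hS _ _ _ t
  have hlin : ∀ t : ℝ, HasDerivAt (fun t : ℝ => α * ‖w‖^2 * t) (α * ‖w‖^2) t := by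
    intro t
    simpa using (hasDerivAt_id t).const_mul (α * ‖w‖^2)
  have hbound : ∀ t : ℝ,
      (fderiv ℝ (fderiv ℝ S) (((q, Q') : Ed d × Ed d) + t • ((0, w) : Ed d × Ed d)) ((0, w) : Ed d × Ed d)) ((w, 0) : Ed d × Ed d)
        ≤ -α * ‖w‖^2 := by
    intro t
    have h1 : ((q, Q') : Ed d × Ed d) + t • ((0, w) : Ed d × Ed d) = (q, Q' + t • w) := by
      ext
      · simp
      · simp
    rw [h1, ← mixedS_eq hS]
    exact hα q (Q' + t • w) w
  have hmono : Antitone (fun t : ℝ =>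
      fderiv ℝ S (((q, Q') : Ed d × Ed d) + t • ((0, w) : Ed d × Ed d)) ((w, 0) : Ed d × Ed d) + α * ‖w‖^2 * t) := by
    apply antitone_of_deriv_nonpos
    · intro t
      exact ((hζ t).add (hlin t)).differentiableAt
    · intro t
      rw [((hζ t).fun_add (hlin t)).deriv]
      linarith [hbound t]
  have h01 := hmono (show (0:ℝ) ≤ 1 by norm_num)
  simp only at h01
  have e1 : ((q, Q') : Ed d × Ed d) + (1:ℝ) • ((0, w) : Ed d × Ed d) = (q, Q) := by
    ext
    · simp
    · simp [hwdef]
  have e0 : ((q, Q') : Ed d × Ed d) + (0:ℝ) • ((0, w) : Ed d × Ed d) = (q, Q') := by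
    ext <;> simp
  rw [e1, e0] at h01
  linarith

lemma S_coercive (hS : ContDiff ℝ 2 S) {α C₂ : ℝ} (hα0 : 0 < α)
    (hα : ∀ q Q v, mixedS S q Q v ≤ -α * ‖v‖^2)
    (hC₂ : ∀ x : Ed d, ‖fderiv ℝ S (x, x)‖ ≤ C₂) (q Q : Ed d) :
    S (q, q) - C₂ * ‖Q - q‖ + α/2 * ‖Q - q‖^2 ≤ S (q, Q) := by
  set w := Q - q with hwdef
  have hnw : ‖((0 : Ed d), w)‖ = ‖w‖ := by
    simp [Prod.norm_def]
  have step1 : ∀ t : ℝ, 0 ≤ t →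
      -C₂ * ‖w‖ + α * t * ‖w‖^2 ≤ fderiv ℝ S (q, q + t • w) (((0 : Ed d), w) : Ed d × Ed d) := by
    intro t ht
    have hχ : ∀ s : ℝ, HasDerivAt
        (fun s : ℝ => fderiv ℝ S (((q, q + t • w) : Ed d × Ed d) + s • ((w, 0) : Ed d × Ed d)) ((0, w) : Ed d × Ed d))
        ((fderiv ℝ (fderiv ℝ S) (((q, q + t • w) : Ed d × Ed d) + s • ((w, 0) : Ed d × Ed d)) ((w, 0) : Ed d × Ed d)) ((0, w) : Ed d × Ed d)) s :=
      fun s => hasDerivAt_fderiv_line hS _ _ _ s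
    have hb : ∀ s : ℝ,
        (fderiv ℝ (fderiv ℝ S) (((q, q + t • w) : Ed d × Ed d) + s • ((w, 0) : Ed d × Ed d)) ((w, 0) : Ed d × Ed d)) ((0, w) : Ed d × Ed d)
          ≤ -α * ‖w‖^2 := by
      intro s
      have h1 : ((q, q + t • w) : Ed d × Ed d) + s • ((w, 0) : Ed d × Ed d) = (q + s • w, q + t • w) := by
        ext <;> simp
      rw [h1, schwarzS hS, ← mixedS_eq hS]
      exact hα _ _ w
    have hlin : ∀ s : ℝ, HasDerivAt (fun s : ℝ => α * ‖w‖^2 * s) (α * ‖w‖^2) s := by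
      intro s
      simpa using (hasDerivAt_id s).const_mul (α * ‖w‖^2)
    have hmono : Antitone (fun s : ℝ =>
        fderiv ℝ S (((q, q + t • w) : Ed d × Ed d) + s • ((w, 0) : Ed d × Ed d)) ((0, w) : Ed d × Ed d) + α * ‖w‖^2 * s) := by
      apply antitone_of_deriv_nonpos
      · intro s
        exact ((hχ s).add (hlin s)).differentiableAt
      · intro s
        rw [((hχ s).fun_add (hlin s)).deriv]
        linarith [hb s]
    have h0t := hmono ht
    simp only at h0t
    have e0 : ((q, q + t • w) : Ed d × Ed d) + (0:ℝ) • ((w, 0) : Ed d × Ed d) = (q, q + t • w) := by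
      ext <;> simp
    have et : ((q, q + t • w) : Ed d × Ed d) + t • ((w, 0) : Ed d × Ed d) = (q + t • w, q + t • w) := by
      ext <;> simp
    rw [e0, et] at h0t
    have hdiag : -(C₂ * ‖w‖) ≤ fderiv ℝ S ((q + t • w, q + t • w) : Ed d × Ed d) ((0, w) : Ed d × Ed d) := by
      have h1 := (fderiv ℝ S ((q + t • w, q + t • w) : Ed d × Ed d)).le_opNorm (((0 : Ed d), w) : Ed d × Ed d)
      rw [hnw] at h1
      have h2 : ‖fderiv ℝ S ((q + t • w, q + t • w) : Ed d × Ed d)‖ ≤ C₂ := hC₂ _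
      have h3 : ‖fderiv ℝ S ((q + t • w, q + t • w) : Ed d × Ed d) ((0, w) : Ed d × Ed d)‖ ≤ C₂ * ‖w‖ := by
        refine h1.trans ?_
        exact mul_le_mul_of_nonneg_right h2 (norm_nonneg _)
      have h4 := (abs_le.mp (by rwa [Real.norm_eq_abs] at h3)).1
      linarith
    nlinarith [h0t, hdiag]
  have hΘ : ∀ t : ℝ, HasDerivAt
      (fun t : ℝ => S (((q, q) : Ed d × Ed d) + t • ((0, w) : Ed d × Ed d)))
      (fderiv ℝ S (((q, q) : Ed d × Ed d) + t • ((0, w) : Ed d × Ed d)) ((0, w) : Ed d × Ed d)) t :=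
    fun t => hasDerivAt_line (hS.differentiable (by norm_num)) _ _ t
  have hQt : ∀ t : ℝ, ((q, q) : Ed d × Ed d) + t • ((0, w) : Ed d × Ed d) = (q, q + t • w) := by
    intro t
    ext <;> simp
  have hκ : ∀ t : ℝ, HasDerivAt
      (fun t : ℝ => S (((q, q) : Ed d × Ed d) + t • ((0, w) : Ed d × Ed d)) + C₂ * ‖w‖ * t - α/2 * ‖w‖^2 * t^2)
      (fderiv ℝ S (((q, q) : Ed d × Ed d) + t • ((0, w) : Ed d × Ed d)) ((0, w) : Ed d × Ed d) + C₂ * ‖w‖ - α * ‖w‖^2 * t) t := by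
    intro t
    have h1 : HasDerivAt (fun t : ℝ => C₂ * ‖w‖ * t) (C₂ * ‖w‖) t := by
      simpa using (hasDerivAt_id t).const_mul (C₂ * ‖w‖)
    have h2 : HasDerivAt (fun t : ℝ => α/2 * ‖w‖^2 * t^2) (α/2 * ‖w‖^2 * (2*t)) t := by
      have h := (hasDerivAt_pow 2 t).const_mul (α/2 * ‖w‖^2)
      norm_num at h
      convert h using 1
    have := ((hΘ t).add h1).sub h2
    exact this.congr_deriv (by ring)
  have hmono2 : MonotoneOn
      (fun t : ℝ => S (((q, q) : Ed d × Ed d) + t • ((0, w) : Ed d × Ed d)) + C₂ * ‖w‖ * t - α/2 * ‖w‖^2 * t^2)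
      (Set.Ici 0) := by
    apply monotoneOn_of_deriv_nonneg (convex_Ici 0)
      (fun s _ => (hκ s).continuousAt.continuousWithinAt)
      (fun s hs => (hκ s).differentiableAt.differentiableWithinAt)
    intro s hs
    rw [interior_Ici] at hs
    rw [(hκ s).deriv]
    have := step1 s hs.le
    rw [hQt s] at *
    nlinarith [this]
  have h01 := hmono2 Set.self_mem_Ici (Set.mem_Ici.mpr (zero_le_one)) zero_le_one
  simp only at h01
  have e0 : ((q, q) : Ed d × Ed d) + (0:ℝ) • ((0, w) : Ed d × Ed d) = (q, q) := by
    ext <;> simp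
  have e1 : ((q, q) : Ed d × Ed d) + (1:ℝ) • ((0, w) : Ed d × Ed d) = (q, Q) := by
    ext
    · simp
    · simp [hwdef]
  rw [e0, e1] at h01
  nlinarith [h01]

end AuxST19b

section AuxST19c

open RealInnerProductSpace intervalIntegral

variable {d : ℕ}

lemma integ_sin2pi : ∫ t in (0:ℝ)..1, Real.sin (2*Real.pi*t) = 0 := by
  rw [intervalIntegral.integral_comp_mul_left (f := Real.sin) (c := 2*Real.pi)
    (by positivity)]
  norm_num [integral_sin, Real.cos_two_pi]

lemma integ_cos2pi : ∫ t in (0:ℝ)..1, Real.cos (2*Real.pi*t) = 0 := by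
  rw [intervalIntegral.integral_comp_mul_left (f := Real.cos) (c := 2*Real.pi)
    (by positivity)]
  norm_num [integral_cos, Real.sin_two_pi]

lemma integ_sincos2pi : ∫ t in (0:ℝ)..1, Real.sin (2*Real.pi*t) * Real.cos (2*Real.pi*t) = 0 := by
  have hfun : ∀ t : ℝ, Real.sin (2*Real.pi*t) * Real.cos (2*Real.pi*t)
      = Real.sin (4*Real.pi*t) / 2 := by
    intro t
    rw [show (4:ℝ)*Real.pi*t = 2*(2*Real.pi*t) by ring, Real.sin_two_mul]
    ring
  rw [intervalIntegral.integral_congr (g := fun t => Real.sin (4*Real.pi*t)/2)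
    (fun t _ => hfun t)]
  rw [intervalIntegral.integral_div]
  rw [intervalIntegral.integral_comp_mul_left (f := Real.sin) (c := 4*Real.pi)
    (by positivity)]
  have h4 : Real.cos (4*Real.pi) = 1 := by
    rw [show (4:ℝ)*Real.pi = 2*Real.pi + 2*Real.pi by ring, Real.cos_add_two_pi,
      Real.cos_two_pi]
  norm_num [integral_sin, h4]

lemma integ_cossq2pi : ∫ t in (0:ℝ)..1, Real.cos (2*Real.pi*t)^2 = 1/2 := by
  have hfun : ∀ t : ℝ, Real.cos (2*Real.pi*t)^2 = 1/2 + Real.cos (4*Real.pi*t)/2 := by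
    intro t
    rw [Real.cos_sq, show (2:ℝ)*(2*Real.pi*t) = 4*Real.pi*t by ring]
  rw [intervalIntegral.integral_congr (g := fun t => 1/2 + Real.cos (4*Real.pi*t)/2)
    (fun t _ => hfun t)]
  have hi1 : IntervalIntegrable (fun _ : ℝ => (1:ℝ)/2) MeasureTheory.volume 0 1 :=
    intervalIntegrable_const
  have hi2 : IntervalIntegrable (fun t : ℝ => Real.cos (4*Real.pi*t)/2)
      MeasureTheory.volume 0 1 := by
    apply Continuous.intervalIntegrable
    fun_prop
  have h2 : (∫ t in (0:ℝ)..1, Real.cos (4*Real.pi*t)/2) = 0 := by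
    rw [intervalIntegral.integral_div]
    rw [intervalIntegral.integral_comp_mul_left (f := Real.cos) (c := 4*Real.pi)
      (by positivity)]
    have h4 : Real.sin (4*Real.pi) = 0 := by
      rw [show (4:ℝ)*Real.pi = 2*Real.pi + 2*Real.pi by ring, Real.sin_add_two_pi,
        Real.sin_two_pi]
    norm_num [integral_cos, h4]
  rw [intervalIntegral.integral_add hi1 hi2, h2]
  simp

lemma integ_sinsq2pi : ∫ t in (0:ℝ)..1, Real.sin (2*Real.pi*t)^2 = 1/2 := by
  have hfun : ∀ t : ℝ, Real.sin (2*Real.pi*t)^2 = 1 - Real.cos (2*Real.pi*t)^2 := by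
    intro t
    have := Real.sin_sq_add_cos_sq (2*Real.pi*t)
    linarith
  rw [intervalIntegral.integral_congr (g := fun t => 1 - Real.cos (2*Real.pi*t)^2)
    (fun t _ => hfun t)]
  have hi1 : IntervalIntegrable (fun _ : ℝ => (1:ℝ)) MeasureTheory.volume 0 1 :=
    intervalIntegrable_const
  have hi2 : IntervalIntegrable (fun t : ℝ => Real.cos (2*Real.pi*t)^2)
      MeasureTheory.volume 0 1 := by
    apply Continuous.intervalIntegrable
    fun_prop
  rw [intervalIntegral.integral_sub hi1 hi2, integ_cossq2pi]
  norm_num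

/-- Integral of a linear combination of the five basic trigonometric terms. -/
lemma integ_lin_comb (c1 c2 c3 c4 c5 : ℝ) :
    ∫ t in (0:ℝ)..1, (c1 * Real.sin (2*Real.pi*t) + c2 * Real.cos (2*Real.pi*t)
      + c3 * (Real.sin (2*Real.pi*t) * Real.cos (2*Real.pi*t))
      + c4 * Real.cos (2*Real.pi*t)^2
      + c5 * Real.sin (2*Real.pi*t)^2) = c4/2 + c5/2 := by
  have I1 : IntervalIntegrable (fun t : ℝ => c1 * Real.sin (2*Real.pi*t))
      MeasureTheory.volume 0 1 := by
    apply Continuous.intervalIntegrable; fun_prop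
  have I2 : IntervalIntegrable (fun t : ℝ => c2 * Real.cos (2*Real.pi*t))
      MeasureTheory.volume 0 1 := by
    apply Continuous.intervalIntegrable; fun_prop
  have I3 : IntervalIntegrable
      (fun t : ℝ => c3 * (Real.sin (2*Real.pi*t) * Real.cos (2*Real.pi*t)))
      MeasureTheory.volume 0 1 := by
    apply Continuous.intervalIntegrable; fun_prop
  have I4 : IntervalIntegrable (fun t : ℝ => c4 * Real.cos (2*Real.pi*t)^2)
      MeasureTheory.volume 0 1 := by
    apply Continuous.intervalIntegrable; fun_prop
  have I5 : IntervalIntegrable (fun t : ℝ => c5 * Real.sin (2*Real.pi*t)^2)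
      MeasureTheory.volume 0 1 := by
    apply Continuous.intervalIntegrable; fun_prop
  rw [intervalIntegral.integral_add ((((I1.add I2).add I3)).add I4) I5,
    intervalIntegral.integral_add (((I1.add I2)).add I3) I4,
    intervalIntegral.integral_add (I1.add I2) I3,
    intervalIntegral.integral_add I1 I2,
    intervalIntegral.integral_const_mul, intervalIntegral.integral_const_mul,
    intervalIntegral.integral_const_mul, intervalIntegral.integral_const_mul,
    intervalIntegral.integral_const_mul,
    integ_sin2pi, integ_cos2pi, integ_sincos2pi, integ_cossq2pi, integ_sinsq2pi]
  ring

set_option maxHeartbeats 1000000 in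
/-- The derivative of a `C¹` map whose graph is Lagrangian is symmetric. -/
lemma fderiv_symm_of_lagrangian {ν : Ed d → Ed d} (hν : ContDiff ℝ 1 ν)
    (hL : IsLagrangianGraph ν) (q v w : Ed d) :
    ⟪fderiv ℝ ν q v, w⟫ = ⟪fderiv ℝ ν q w, v⟫ := by
  set A := fderiv ℝ ν q with hA
  suffices hsuff : ∀ εs : ℝ, 0 < εs → |⟪A v, w⟫ - ⟪A w, v⟫| ≤ εs * (4 * (‖v‖ + ‖w‖)^2) by
    by_contra hne
    have habs : 0 < |⟪A v, w⟫ - ⟪A w, v⟫| := by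
      rw [abs_pos, sub_ne_zero]
      exact hne
    set c := 4 * (‖v‖ + ‖w‖)^2 with hc
    have hc0 : 0 ≤ c := by positivity
    have h := hsuff (|⟪A v, w⟫ - ⟪A w, v⟫| / (2 * (c+1))) (by positivity)
    set D := |⟪A v, w⟫ - ⟪A w, v⟫|
    have hkey : D / (2*(c+1)) * c < D := by
      rw [div_mul_eq_mul_div, div_lt_iff₀ (by positivity)]
      nlinarith
    linarith
  intro εs hεs
  have hdA : HasFDerivAt ν A q := (hν.differentiable one_ne_zero q).hasFDerivAt
  have hlo := hasFDerivAt_iff_isLittleO_nhds_zero.mp hdA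
  rw [Asymptotics.isLittleO_iff] at hlo
  have hev := hlo hεs
  rw [Metric.eventually_nhds_iff] at hev
  obtain ⟨δ, hδ, hbd⟩ := hev
  set s := ‖v‖ + ‖w‖ with hs
  have hs0 : 0 ≤ s := by positivity
  set r := δ / (2 * (s + 1)) with hr
  have hrpos : 0 < r := by positivity
  set π2 := 2 * Real.pi with hπ2
  have hπ2pos : 0 < π2 := by rw [hπ2]; positivity
  set a : ℝ → ℝ := fun t => r * (Real.cos (π2*t) - 1) with ha
  set b : ℝ → ℝ := fun t => r * Real.sin (π2*t) with hb
  set a' : ℝ → ℝ := fun t => -(r * Real.sin (π2*t) * π2) with ha'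
  set b' : ℝ → ℝ := fun t => r * (Real.cos (π2*t) * π2) with hb'
  set ℓ : ℝ → Ed d := fun t => q + (a t • v + b t • w) with hℓ
  have hc1 : ∀ t : ℝ, HasDerivAt (fun t : ℝ => π2 * t) π2 t := by
    intro t
    simpa using (hasDerivAt_id t).const_mul π2
  have hA' : ∀ t, HasDerivAt a (a' t) t := by
    intro t
    have hcos : HasDerivAt (fun t : ℝ => Real.cos (π2*t)) (-Real.sin (π2*t) * π2) t :=
      (Real.hasDerivAt_cos (π2*t)).comp t (hc1 t)
    have := (hcos.sub_const 1).const_mul r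
    exact this.congr_deriv (by simp only [ha']; ring)
  have hB' : ∀ t, HasDerivAt b (b' t) t := by
    intro t
    have hsin : HasDerivAt (fun t : ℝ => Real.sin (π2*t)) (Real.cos (π2*t) * π2) t :=
      (Real.hasDerivAt_sin (π2*t)).comp t (hc1 t)
    exact hsin.const_mul r
  have hℓd : ∀ t, HasDerivAt ℓ (a' t • v + b' t • w) t := by
    intro t
    exact (((hA' t).smul_const v).add ((hB' t).smul_const w)).const_add q
  have hℓC1 : ContDiff ℝ 1 ℓ := by
    apply contDiff_const.add
    apply ContDiff.add
    · exact (contDiff_const.mul (((Real.contDiff_cos.of_le le_top).comp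
        (contDiff_const.mul contDiff_id)).sub contDiff_const)).smul contDiff_const
    · exact (contDiff_const.mul ((Real.contDiff_sin.of_le le_top).comp
        (contDiff_const.mul contDiff_id))).smul contDiff_const
  have hℓper : ∀ t, ℓ (t+1) = ℓ t := by
    intro t
    have h1 : π2*(t+1) = π2*t + 2*Real.pi := by rw [hπ2]; ring
    rw [hℓ]
    simp only [ha, hb, h1, Real.cos_add_two_pi, Real.sin_add_two_pi]
  have hint := hL ℓ hℓC1 hℓper
  set e : Ed d → Ed d := fun y => ν y - ν q - A (y - q) with he
  set P : ℝ → ℝ := fun t => ⟪ν q, a' t • v + b' t • w⟫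
      + ⟪A (a t • v + b t • w), a' t • v + b' t • w⟫ with hP
  set R : ℝ → ℝ := fun t => ⟪e (ℓ t), a' t • v + b' t • w⟫ with hR
  have hℓsub : ∀ t, ℓ t - q = a t • v + b t • w := by
    intro t
    rw [hℓ]
    exact add_sub_cancel_left _ _
  have hsplit : ∀ t, pairing (ν (ℓ t)) (deriv ℓ t) = P t + R t := by
    intro t
    rw [pairing_eq_inner, (hℓd t).deriv]
    have h2 : ν (ℓ t) = ν q + A (a t • v + b t • w) + e (ℓ t) := by
      rw [he]
      simp only
      rw [hℓsub t]
      abel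
    rw [h2, inner_add_left, inner_add_left, hP, hR]
  have hPc : Continuous P := by
    apply Continuous.add
    · apply Continuous.inner continuous_const
      fun_prop
    · apply Continuous.inner
      · exact A.continuous.comp (by fun_prop)
      · fun_prop
  have hRc : Continuous R := by
    apply Continuous.inner
    · have hec : Continuous e := by
        rw [he]
        apply Continuous.sub
        · exact (hν.continuous).sub continuous_const
        · exact A.continuous.comp (continuous_id.sub continuous_const)
      exact hec.comp (by fun_prop)
    · fun_prop
  have hPR0 : (∫ t in (0:ℝ)..1, P t) + (∫ t in (0:ℝ)..1, R t) = 0 := by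
    rw [← intervalIntegral.integral_add (hPc.intervalIntegrable 0 1)
      (hRc.intervalIntegrable 0 1)]
    rw [← intervalIntegral.integral_congr (fun t _ => hsplit t)]
    exact hint
  have hPex : ∀ t, P t = (-(r*π2*⟪ν q, v⟫) ) * Real.sin (π2*t)
      + (r*π2*⟪ν q, w⟫) * Real.cos (π2*t)
      + ((r^2*π2*(⟪A w, w⟫ - ⟪A v, v⟫)) ) * (Real.sin (π2*t) * Real.cos (π2*t))
      + (r^2*π2*⟪A v, w⟫) * Real.cos (π2*t)^2
      + (-(r^2*π2*⟪A w, v⟫)) * Real.sin (π2*t)^2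
      + (r^2*π2*⟪A v, v⟫) * Real.sin (π2*t)
      + (-(r^2*π2*⟪A v, w⟫)) * Real.cos (π2*t) := by
    intro t
    rw [hP]
    simp only [ha, hb, ha', hb', _root_.map_add, _root_.map_smul, inner_add_left,
      inner_add_right, real_inner_smul_left, real_inner_smul_right, smul_eq_mul]
    ring
  have hIP : ∫ t in (0:ℝ)..1, P t
      = Real.pi * r^2 * (⟪A v, w⟫ - ⟪A w, v⟫) := by
    have h7 : ∀ t, P t = ((-(r*π2*⟪ν q, v⟫)) + r^2*π2*⟪A v, v⟫) * Real.sin (π2*t)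
        + ((r*π2*⟪ν q, w⟫) + (-(r^2*π2*⟪A v, w⟫))) * Real.cos (π2*t)
        + ((r^2*π2*(⟪A w, w⟫ - ⟪A v, v⟫))) * (Real.sin (π2*t) * Real.cos (π2*t))
        + (r^2*π2*⟪A v, w⟫) * Real.cos (π2*t)^2
        + (-(r^2*π2*⟪A w, v⟫)) * Real.sin (π2*t)^2 := by
      intro t
      rw [hPex t]
      ring
    rw [intervalIntegral.integral_congr (fun t _ => h7 t)]
    rw [hπ2]
    rw [integ_lin_comb]
    ring
  have habs' : ∀ t : ℝ, |a' t| ≤ r * π2 := by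
    intro t
    rw [ha', abs_neg, abs_mul, abs_mul]
    rw [abs_of_pos hrpos, abs_of_pos hπ2pos]
    have hx : |Real.sin (π2*t)| ≤ 1 :=
      abs_le.mpr ⟨Real.neg_one_le_sin (π2*t), Real.sin_le_one (π2*t)⟩
    have h1 : r * |Real.sin (π2*t)| ≤ r * 1 := mul_le_mul_of_nonneg_left hx hrpos.le
    have h2 : r * |Real.sin (π2*t)| * π2 ≤ r * 1 * π2 :=
      mul_le_mul_of_nonneg_right h1 hπ2pos.le
    linarith [h2]
  have hbbs' : ∀ t : ℝ, |b' t| ≤ r * π2 := by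
    intro t
    rw [hb', abs_mul, abs_mul]
    rw [abs_of_pos hrpos, abs_of_pos hπ2pos]
    have hx : |Real.cos (π2*t)| ≤ 1 :=
      abs_le.mpr ⟨Real.neg_one_le_cos (π2*t), Real.cos_le_one (π2*t)⟩
    have h1 : r * |Real.cos (π2*t)| ≤ r * 1 := mul_le_mul_of_nonneg_left hx hrpos.le
    have h2 : r * |Real.cos (π2*t)| * π2 ≤ r * 1 * π2 :=
      mul_le_mul_of_nonneg_right h1 hπ2pos.le
    linarith [h2]
  have habs : ∀ t : ℝ, |a t| ≤ 2*r := by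
    intro t
    rw [ha, abs_mul, abs_of_pos hrpos]
    have h1 : |Real.cos (π2*t) - 1| ≤ 2 := by
      rw [abs_le]
      constructor
      · linarith [Real.neg_one_le_cos (π2*t)]
      · linarith [Real.cos_le_one (π2*t)]
    have h2 : r * |Real.cos (π2*t) - 1| ≤ r * 2 := mul_le_mul_of_nonneg_left h1 hrpos.le
    linarith [h2]
  have hbbs : ∀ t : ℝ, |b t| ≤ r := by
    intro t
    rw [hb, abs_mul, abs_of_pos hrpos]
    have hx : |Real.sin (π2*t)| ≤ 1 :=
      abs_le.mpr ⟨Real.neg_one_le_sin (π2*t), Real.sin_le_one (π2*t)⟩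
    have h2 : r * |Real.sin (π2*t)| ≤ r * 1 := mul_le_mul_of_nonneg_left hx hrpos.le
    linarith [h2]
  have hder_norm : ∀ t : ℝ, ‖a' t • v + b' t • w‖ ≤ r * π2 * s := by
    intro t
    calc ‖a' t • v + b' t • w‖ ≤ ‖a' t • v‖ + ‖b' t • w‖ := norm_add_le _ _
      _ = |a' t| * ‖v‖ + |b' t| * ‖w‖ := by
          rw [norm_smul, norm_smul, Real.norm_eq_abs, Real.norm_eq_abs]
      _ ≤ r * π2 * ‖v‖ + r * π2 * ‖w‖ := by
          have h1 := mul_le_mul_of_nonneg_right (habs' t) (norm_nonneg v)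
          have h2 := mul_le_mul_of_nonneg_right (hbbs' t) (norm_nonneg w)
          linarith
      _ = r * π2 * s := by rw [hs]; ring
  have hoff_norm : ∀ t : ℝ, ‖ℓ t - q‖ ≤ 2 * r * s := by
    intro t
    rw [hℓsub t]
    calc ‖a t • v + b t • w‖ ≤ ‖a t • v‖ + ‖b t • w‖ := norm_add_le _ _
      _ = |a t| * ‖v‖ + |b t| * ‖w‖ := by
          rw [norm_smul, norm_smul, Real.norm_eq_abs, Real.norm_eq_abs]
      _ ≤ 2*r*‖v‖ + 2*r*‖w‖ := by
          have h1 := mul_le_mul_of_nonneg_right (habs t) (norm_nonneg v)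
          have h2 := mul_le_mul_of_nonneg_right (hbbs t) (norm_nonneg w)
          have h3 := mul_le_mul_of_nonneg_right hrpos.le (norm_nonneg w)
          linarith
      _ = 2 * r * s := by rw [hs]; ring
  have hrs : 2 * r * s < δ := by
    have hs1 : s + 1 ≠ 0 := by positivity
    have h1 : 2 * r * s = δ * s / (s + 1) := by
      rw [hr]
      field_simp
    rw [h1, div_lt_iff₀ (by positivity)]
    nlinarith
  have hRb : ∀ t ∈ Set.uIoc (0:ℝ) 1, ‖R t‖ ≤ εs * (2*r*s) * (r*π2*s) := by
    intro t _
    have h2 : ‖e (ℓ t)‖ ≤ εs * ‖ℓ t - q‖ := by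
      have hdist : dist (ℓ t - q) 0 < δ := by
        rw [dist_zero_right]
        calc ‖ℓ t - q‖ ≤ 2*r*s := hoff_norm t
          _ < δ := hrs
      have hb2 := hbd hdist
      have h3 : q + (ℓ t - q) = ℓ t := by abel
      rw [h3] at hb2
      simpa [he] using hb2
    calc ‖R t‖ = |⟪e (ℓ t), a' t • v + b' t • w⟫| := by rw [hR, Real.norm_eq_abs]
      _ ≤ ‖e (ℓ t)‖ * ‖a' t • v + b' t • w‖ := abs_real_inner_le_norm _ _
      _ ≤ (εs * (2*r*s)) * (r*π2*s) := by
          have h1 := hder_norm t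
          have h3 := hoff_norm t
          have h4 := norm_nonneg (e (ℓ t))
          have h5 := norm_nonneg (a' t • v + b' t • w)
          have h6 : ‖e (ℓ t)‖ ≤ εs * (2*r*s) := by nlinarith
          nlinarith
      _ = εs * (2*r*s) * (r*π2*s) := by ring
  have hIRb := intervalIntegral.norm_integral_le_of_norm_le_const hRb
  have hIR : |∫ t in (0:ℝ)..1, R t| ≤ εs * (2*r*s) * (r*π2*s) := by
    rw [← Real.norm_eq_abs]
    simpa using hIRb
  have h5 : |Real.pi * r^2 * (⟪A v, w⟫ - ⟪A w, v⟫)| ≤ εs * (2*r*s) * (r*π2*s) := by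
    rw [← hIP]
    have h6 : (∫ t in (0:ℝ)..1, P t) = - ∫ t in (0:ℝ)..1, R t := by linarith
    rw [h6, abs_neg]
    exact hIR
  have hπpos := Real.pi_pos
  rw [abs_mul, abs_mul, abs_of_pos hπpos, abs_of_pos (pow_pos hrpos 2)] at h5
  rw [hπ2] at h5
  nlinarith [abs_nonneg (⟪A v, w⟫ - ⟪A w, v⟫), sq_nonneg r, mul_pos hπpos (pow_pos hrpos 2)]

end AuxST19c

section AuxST19d

open RealInnerProductSpace intervalIntegral MeasureTheory

variable {d : ℕ}

lemma lipschitzOnWith_weaken {α β : Type*} [PseudoEMetricSpace α] [PseudoEMetricSpace β]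
    {K K' : NNReal} {f : α → β} {s : Set α} (h : LipschitzOnWith K f s) (hK : K ≤ K') :
    LipschitzOnWith K' f s := fun x hx y hy =>
  (h hx hy).trans (mul_le_mul_left (ENNReal.coe_le_coe.mpr hK) _)

set_option maxHeartbeats 1000000 in
set_option synthInstance.maxHeartbeats 400000 in
/-- A `C¹` vector field with symmetric derivative has a global potential. -/
lemma exists_primitive {ν : Ed d → Ed d} (hν : ContDiff ℝ 1 ν)
    (hsym : ∀ q v w : Ed d, ⟪fderiv ℝ ν q v, w⟫ = ⟪fderiv ℝ ν q w, v⟫) :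
    ∃ u : Ed d → ℝ, ∀ x, HasFDerivAt u ((innerSL ℝ) (ν x)) x := by
  have hνd : Differentiable ℝ ν := hν.differentiable one_ne_zero
  have hνc : Continuous ν := hν.continuous
  have hDc : Continuous (fderiv ℝ ν) := hν.continuous_fderiv one_ne_zero
  refine ⟨fun x => ∫ t in (0:ℝ)..1, ⟪ν (t • x), x⟫, fun x₀ => ?_⟩
  obtain ⟨Mν, hMν⟩ := (isCompact_closedBall (0 : Ed d) (‖x₀‖+1)).exists_bound_of_continuousOn
    hνc.continuousOn
  obtain ⟨MD, hMD⟩ := (isCompact_closedBall (0 : Ed d) (‖x₀‖+1)).exists_bound_of_continuousOn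
    hDc.continuousOn
  set Mb : ℝ := (‖x₀‖+1) * |MD| + |Mν| + 1 with hMb
  have hMbpos : 0 < Mb := by positivity
  set F' : ℝ → Ed d →L[ℝ] ℝ := fun t =>
    t • (((innerSL ℝ) x₀).comp (fderiv ℝ ν (t • x₀))) + (innerSL ℝ) (ν (t • x₀)) with hF'
  have hderiv : ∀ t : ℝ, ∀ x : Ed d, HasFDerivAt (fun x : Ed d => ⟪ν (t • x), x⟫)
      (t • (((innerSL ℝ) x).comp (fderiv ℝ ν (t • x))) + (innerSL ℝ) (ν (t • x))) x := by
    intro t x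
    have h1 : HasFDerivAt (fun x : Ed d => t • x) (t • ContinuousLinearMap.id ℝ (Ed d)) x :=
      (hasFDerivAt_id x).const_smul t
    have h2 : HasFDerivAt (fun x : Ed d => ν (t • x))
        ((fderiv ℝ ν (t • x)).comp (t • ContinuousLinearMap.id ℝ (Ed d))) x :=
      (hνd (t • x)).hasFDerivAt.comp x h1
    have h3 := h2.inner (𝕜 := ℝ) (hasFDerivAt_id x)
    refine h3.congr_fderiv ?_
    refine ContinuousLinearMap.ext fun y => ?_
    simp only [ContinuousLinearMap.add_apply, ContinuousLinearMap.smul_apply,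
      ContinuousLinearMap.comp_apply, ContinuousLinearMap.prod_apply,
      ContinuousLinearMap.coe_id', id_eq, innerSL_apply_apply, smul_eq_mul,
      fderivInnerCLM_apply, ContinuousLinearMap.map_smul, real_inner_smul_left]
    rw [real_inner_comm ((fderiv ℝ ν (t • x)) y) x]
    ring
  have hF'c : Continuous F' := by
    apply Continuous.add
    · apply Continuous.smul continuous_id
      exact continuous_const.clm_comp (hDc.comp (by fun_prop))
    · exact (innerSL ℝ).continuous.comp (hνc.comp (by fun_prop))
  have hFcont : ∀ x : Ed d, Continuous (fun t : ℝ => ⟪ν (t • x), x⟫) := by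
    intro x
    apply Continuous.inner
    · exact hνc.comp (by fun_prop)
    · exact continuous_const
  have key := intervalIntegral.hasFDerivAt_integral_of_dominated_loc_of_lip
    (𝕜 := ℝ) (μ := volume) (F := fun x t => ⟪ν (t • x), x⟫) (F' := F') (x₀ := x₀)
    (a := 0) (b := 1) (bound := fun _ => Mb) (s := Metric.ball x₀ 1) (Metric.ball_mem_nhds x₀ one_pos)
    (Filter.Eventually.of_forall fun x => ((hFcont x).aestronglyMeasurable))
    ((hFcont x₀).intervalIntegrable 0 1)
    (hF'c.aestronglyMeasurable)
    ?_
    intervalIntegrable_const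
    (Filter.Eventually.of_forall fun t _ => hderiv t x₀)
  · obtain ⟨-, hU⟩ := key
    have happly : (∫ t in (0:ℝ)..1, F' t) = (innerSL ℝ) (ν x₀) := by
      refine ContinuousLinearMap.ext fun y => ?_
      have hint : IntegrableOn F' (Set.Ioc (0:ℝ) 1) volume :=
        hF'c.integrableOn_Ioc
      have h1 : (∫ t in (0:ℝ)..1, F' t) y = ∫ t in (0:ℝ)..1, (F' t) y := by
        rw [intervalIntegral.integral_of_le zero_le_one,
          intervalIntegral.integral_of_le zero_le_one]
        exact ContinuousLinearMap.integral_apply hint y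
      rw [h1]
      have hw : ∀ t : ℝ, HasDerivAt (fun t : ℝ => t * ⟪ν (t • x₀), y⟫) ((F' t) y) t := by
        intro t
        have hcurve : HasDerivAt (fun t : ℝ => ν (t • x₀)) ((fderiv ℝ ν (t • x₀)) x₀) t := by
          have := hasDerivAt_line hνd 0 x₀ t
          simpa using this
        have h2 : (fun t : ℝ => ⟪ν (t • x₀), y⟫) = fun t => (innerSL ℝ y) (ν (t • x₀)) := by
          funext t
          rw [innerSL_apply_apply, real_inner_comm]
        have h3 := (innerSL ℝ y).hasFDerivAt.comp_hasDerivAt t hcurve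
        have hip : HasDerivAt (fun t : ℝ => ⟪ν (t • x₀), y⟫)
            (⟪(fderiv ℝ ν (t • x₀)) x₀, y⟫) t := by
          rw [h2]
          have h4 : (innerSL ℝ y) ((fderiv ℝ ν (t • x₀)) x₀)
              = ⟪(fderiv ℝ ν (t • x₀)) x₀, y⟫ := by
            rw [innerSL_apply_apply, real_inner_comm]
          rw [← h4]
          exact h3
        have h5 := (hasDerivAt_id t).mul hip
        refine h5.congr_deriv ?_
        rw [hF']
        simp only [ContinuousLinearMap.add_apply, ContinuousLinearMap.smul_apply,
          ContinuousLinearMap.comp_apply, innerSL_apply_apply, smul_eq_mul, id_eq, one_mul]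
        rw [real_inner_comm ((fderiv ℝ ν (t • x₀)) y) x₀, hsym (t • x₀) y x₀]
        ring
      have hcont : ContinuousOn (fun t => (F' t) y) (Set.uIcc (0:ℝ) 1) :=
        ((ContinuousLinearMap.apply ℝ ℝ y).continuous.comp hF'c).continuousOn
      have hftc : ∫ t in (0:ℝ)..1, (F' t) y
          = (fun t : ℝ => t * ⟪ν (t • x₀), y⟫) 1 - (fun t : ℝ => t * ⟪ν (t • x₀), y⟫) 0 :=
        intervalIntegral.integral_deriv_eq_sub' _ (funext fun t => (hw t).deriv)
          (fun t _ => (hw t).differentiableAt) hcont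
      rw [hftc]
      simp
    rw [happly] at hU
    exact hU
  · refine Filter.Eventually.of_forall fun t ht => ?_
    have ht1 : |t| ≤ 1 := by
      rw [Set.uIoc_of_le zero_le_one] at ht
      rw [abs_le]
      constructor <;> [linarith [ht.1]; linarith [ht.2]]
    have hlip : LipschitzOnWith Mb.toNNReal (fun x => ⟪ν (t • x), x⟫) (Metric.ball x₀ 1) := by
      apply Convex.lipschitzOnWith_of_nnnorm_fderiv_le (𝕜 := ℝ)
        (fun x _ => (hderiv t x).differentiableAt) ?_ (convex_ball x₀ 1)
      intro x hx
      have hxb : ‖x‖ ≤ ‖x₀‖ + 1 := by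
        have := mem_ball_iff_norm.mp hx
        have h2 := norm_sub_norm_le x x₀
        linarith
      have htx : t • x ∈ Metric.closedBall (0 : Ed d) (‖x₀‖+1) := by
        rw [Metric.mem_closedBall, dist_zero_right, norm_smul, Real.norm_eq_abs]
        nlinarith [norm_nonneg x, abs_nonneg t]
      have hnorm : ‖fderiv ℝ (fun x : Ed d => ⟪ν (t • x), x⟫) x‖ ≤ Mb := by
        rw [(hderiv t x).fderiv]
        have hb1 : ‖t • (((innerSL ℝ) x).comp (fderiv ℝ ν (t • x)))‖ ≤ (‖x₀‖+1) * |MD| := by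
          have hns := norm_smul t (((innerSL ℝ) x).comp (fderiv ℝ ν (t • x)))
          rw [hns, Real.norm_eq_abs]
          have hc1 : ‖(((innerSL ℝ) x).comp (fderiv ℝ ν (t • x)))‖
              ≤ ‖(innerSL ℝ) x‖ * ‖fderiv ℝ ν (t • x)‖ := ContinuousLinearMap.opNorm_comp_le _ _
          have hc2 : ‖(innerSL ℝ) x‖ ≤ ‖x‖ := by
            apply ContinuousLinearMap.opNorm_le_bound _ (norm_nonneg x)
            intro z
            rw [innerSL_apply_apply, Real.norm_eq_abs]
            exact abs_real_inner_le_norm x z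
          have hc3 : ‖fderiv ℝ ν (t • x)‖ ≤ |MD| := (hMD _ htx).trans (le_abs_self MD)
          have hc4 : ‖(((innerSL ℝ) x).comp (fderiv ℝ ν (t • x)))‖ ≤ (‖x₀‖+1) * |MD| := by
            refine hc1.trans ?_
            have := mul_le_mul hc2 hc3 (norm_nonneg _) (norm_nonneg x)
            refine this.trans ?_
            exact mul_le_mul_of_nonneg_right hxb (abs_nonneg MD)
          calc |t| * ‖(((innerSL ℝ) x).comp (fderiv ℝ ν (t • x)))‖
              ≤ 1 * ((‖x₀‖+1) * |MD|) := by
                apply mul_le_mul ht1 hc4 (norm_nonneg _) zero_le_one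
            _ = (‖x₀‖+1) * |MD| := one_mul _
        have hb2 : ‖(innerSL ℝ) (ν (t • x))‖ ≤ |Mν| := by
          have hc2 : ‖(innerSL ℝ) (ν (t • x))‖ ≤ ‖ν (t • x)‖ := by
            apply ContinuousLinearMap.opNorm_le_bound _ (norm_nonneg _)
            intro z
            rw [innerSL_apply_apply, Real.norm_eq_abs]
            exact abs_real_inner_le_norm _ z
          exact hc2.trans ((hMν _ htx).trans (le_abs_self Mν))
        calc ‖t • (((innerSL ℝ) x).comp (fderiv ℝ ν (t • x))) + (innerSL ℝ) (ν (t • x))‖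
            ≤ ‖t • (((innerSL ℝ) x).comp (fderiv ℝ ν (t • x)))‖ + ‖(innerSL ℝ) (ν (t • x))‖ :=
              norm_add_le _ _
          _ ≤ (‖x₀‖+1) * |MD| + |Mν| := add_le_add hb1 hb2
          _ ≤ Mb := by rw [hMb]; linarith
      have hfin : Real.toNNReal ‖fderiv ℝ (fun x : Ed d => ⟪ν (t • x), x⟫) x‖ ≤ Mb.toNNReal :=
        Real.toNNReal_mono hnorm
      rwa [Real.toNNReal_eq_nnnorm_of_nonneg (norm_nonneg _), nnnorm_norm] at hfin
    apply lipschitzOnWith_weaken hlip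
    rw [← NNReal.coe_le_coe, Real.coe_toNNReal _ hMbpos.le, Real.coe_nnabs,
      abs_of_pos hMbpos]

end AuxST19d

section AuxST19e

open RealInnerProductSpace

variable {d : ℕ}

lemma innerSL_norm_le (x : Ed d) : ‖(innerSL ℝ) x‖ ≤ ‖x‖ := by
  apply ContinuousLinearMap.opNorm_le_bound _ (norm_nonneg x)
  intro z
  rw [innerSL_apply_apply, Real.norm_eq_abs]
  exact abs_real_inner_le_norm x z

set_option maxHeartbeats 4000000 in
set_option synthInstance.maxHeartbeats 400000 in
/-- The key bounds on the derivative of an invariant Lagrangian graph. -/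
lemma invariant_graph_bounds
    (S : Ed d × Ed d → ℝ) (G : Ed d → ℝ) (ε : ℝ)
    (hGreg : ContDiff ℝ 2 G) (hGper : ZdPeriodicFun G)
    (Φ : Ed d × Ed d → Ed d × Ed d)
    (hTW : IsSymplecticTwistLift Φ fun x => S x + ε * G x.1)
    (hS : ContDiff ℝ 2 S)
    (hSper : ∀ (m : Fin d → ℤ) (q Q : Ed d), S (q + intVec d m, Q + intVec d m) = S (q, Q))
    {α : ℝ} (hα0 : 0 < α) (hα : ∀ q Q v, mixedS S q Q v ≤ -α * ‖v‖^2)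
    {C : ℝ} (hC : ∀ q Q, ‖hessqq S q Q‖ + ‖hessQQ S q Q‖ ≤ C)
    (ν : Ed d → Ed d) (hν : ContDiff ℝ 1 ν) (hper : ZdPeriodic ν)
    (hLag : IsLagrangianGraph ν) (hinv : Φ '' graphSet ν = graphSet ν) :
    (∀ Q v : Ed d, ⟪fderiv ℝ ν Q v, v⟫ ≤ C * ‖v‖^2) ∧
    (∀ q v : Ed d, -(C * ‖v‖^2) - ε * ((fderiv ℝ (fderiv ℝ G) q v) v) ≤ ⟪fderiv ℝ ν q v, v⟫) := by
  have hνd : Differentiable ℝ ν := hν.differentiable one_ne_zero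
  have hGd : Differentiable ℝ G := hGreg.differentiable (by norm_num)
  have hSd : Differentiable ℝ S := hS.differentiable (by norm_num)
  set g : Ed d → Ed d := fun q => (Φ (q, ν q)).1 with hgdef
  -- invariance
  have hgraphmem : ∀ q : Ed d, (Φ (q, ν q)).2 = ν (g q) := by
    intro q
    have h1 : (q, ν q) ∈ graphSet ν := by simp [graphSet]
    have h2 : Φ (q, ν q) ∈ graphSet ν := by
      rw [← hinv]
      exact Set.mem_image_of_mem Φ h1
    exact h2
  have hsurj : ∀ Q : Ed d, ∃ q : Ed d, g q = Q := by
    intro Q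
    have h1 : (Q, ν Q) ∈ graphSet ν := by simp [graphSet]
    rw [← hinv] at h1
    obtain ⟨x, hx1, hx2⟩ := h1
    refine ⟨x.1, ?_⟩
    have hx3 : (x.1, ν x.1) = x := by
      have h4 : x.2 = ν x.1 := hx1
      ext
      · rfl
      · rw [← h4]
    rw [hgdef]
    simp only
    rw [hx3, hx2]
  have hgC1 : ContDiff ℝ 1 g := by
    rw [hgdef]
    exact (contDiff_fst.comp (hTW.diffeo.1.comp (contDiff_id.prodMk hν)))
  -- generating function identities
  have hdq : ∀ q v : Ed d,
      fderiv ℝ S (q, g q) (v, 0) + ε * (fderiv ℝ G q v) + ⟪ν q, v⟫ = 0 := by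
    intro q v
    have h0 : fderiv ℝ (fun q' : Ed d => S (q', g q) + ε * G q') q v = -(pairing (ν q) v) :=
      hTW.genfun.dq q (ν q) v
    rw [pairing_eq_inner] at h0
    have h1 : HasFDerivAt (fun q' : Ed d => S (q', g q) + ε * G q')
        (((fderiv ℝ S (q, g q)).comp (ContinuousLinearMap.inl ℝ (Ed d) (Ed d)))
          + ε • (fderiv ℝ G q)) q := by
      apply HasFDerivAt.add (hasFDerivAt_S_left hS q (g q))
      have h2 := ((hGd q).hasFDerivAt).const_mul ε
      exact h2
    rw [h1.fderiv] at h0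
    simp only [ContinuousLinearMap.add_apply, ContinuousLinearMap.comp_apply,
      ContinuousLinearMap.inl_apply, ContinuousLinearMap.smul_apply, smul_eq_mul] at h0
    linarith [h0]
  have hdQ : ∀ q v : Ed d, fderiv ℝ S (q, g q) (0, v) = ⟪ν (g q), v⟫ := by
    intro q v
    have h0 : fderiv ℝ (fun Q' : Ed d => S (q, Q') + ε * G q) (g q) v
        = pairing ((Φ (q, ν q)).2) v := hTW.genfun.dQ q (ν q) v
    rw [pairing_eq_inner, hgraphmem q] at h0
    have h1 : HasFDerivAt (fun Q' : Ed d => S (q, Q') + ε * G q)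
        ((fderiv ℝ S (q, g q)).comp (ContinuousLinearMap.inr ℝ (Ed d) (Ed d))) (g q) :=
      (hasFDerivAt_S_right hS q (g q)).add_const (ε * G q)
    rw [h1.fderiv] at h0
    simpa using h0
  -- potential
  have hsymm := fderiv_symm_of_lagrangian hν hLag
  obtain ⟨u, hu⟩ := exists_primitive hν hsymm
  have hudiff : Differentiable ℝ u := fun x => (hu x).differentiableAt
  have huper : ∀ (m : Fin d → ℤ) (x : Ed d),
      u (x + intVec d m) = u x + (u (intVec d m) - u 0) := by
    intro m x
    have hφd : ∀ y : Ed d, HasFDerivAt (fun x : Ed d => u (x + intVec d m) - u x)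
        (0 : Ed d →L[ℝ] ℝ) y := by
      intro y
      have ht : HasFDerivAt (fun z : Ed d => z + intVec d m)
          (ContinuousLinearMap.id ℝ (Ed d)) y := (hasFDerivAt_id y).add_const _
      have h2 := (hu (y + intVec d m)).comp y ht
      rw [ContinuousLinearMap.comp_id] at h2
      have h3 := h2.sub (hu y)
      rw [hper m y, sub_self] at h3
      exact h3
    have hconst := is_const_of_fderiv_eq_zero
      (fun y => (hφd y).differentiableAt) (fun y => (hφd y).fderiv) x 0
    simp only [zero_add] at hconst
    linarith [hconst]
  -- bounds
  obtain ⟨Mν, hMν0, hMν⟩ := bounded_of_periodic hν.continuous hper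
  have hDScont : Continuous (fderiv ℝ S) := hS.continuous_fderiv (by norm_num)
  have hSper' : ∀ (m : Fin d → ℤ) (z : Ed d × Ed d),
      S (z + (intVec d m, intVec d m)) = S z := fun m z => hSper m z.1 z.2
  have hDSdiagper : ∀ (m : Fin d → ℤ) (x : Ed d),
      fderiv ℝ S (x + intVec d m, x + intVec d m) = fderiv ℝ S (x, x) := by
    intro m x
    exact periodic_fderiv hSd (hSper' m) (x, x)
  obtain ⟨C₂, hC₂0, hC₂⟩ := bounded_of_periodic
    (hDScont.comp (continuous_id.prodMk continuous_id)) hDSdiagper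
  have hSdiagper : ∀ (m : Fin d → ℤ) (x : Ed d),
      S (x + intVec d m, x + intVec d m) = S (x, x) := fun m x => hSper m x x
  obtain ⟨C₅, hC₅0, hC₅⟩ := bounded_of_periodic
    (hS.continuous.comp (continuous_id.prodMk continuous_id)) hSdiagper
  obtain ⟨MG, hMG0, hMG⟩ := bounded_of_periodic hGreg.continuous hGper
  have hulip : ∀ x y : Ed d, |u x - u y| ≤ Mν * ‖x - y‖ := by
    intro x y
    have hl : LipschitzWith Mν.toNNReal u := by
      apply lipschitzWith_of_nnnorm_fderiv_le hudiff
      intro z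
      have h1 : ‖fderiv ℝ u z‖ ≤ Mν := by
        rw [(hu z).fderiv]
        exact (innerSL_norm_le (ν z)).trans (hMν z)
      have h2 : Real.toNNReal ‖fderiv ℝ u z‖ ≤ Mν.toNNReal := Real.toNNReal_mono h1
      rwa [Real.toNNReal_eq_nnnorm_of_nonneg (norm_nonneg _), nnnorm_norm] at h2
    have := hl.dist_le_mul x y
    rw [Real.dist_eq, dist_eq_norm, Real.coe_toNNReal _ hMν0] at this
    exact this
  -- the function h
  set h : Ed d × Ed d → ℝ := fun x => S x + ε * G x.1 + u x.1 - u x.2 with hh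
  have hhcont : Continuous h := by
    apply Continuous.sub
    · apply Continuous.add
      · exact hS.continuous.add (continuous_const.mul (hGreg.continuous.comp continuous_fst))
      · exact hudiff.continuous.comp continuous_fst
    · exact hudiff.continuous.comp continuous_snd
  have hcoer : ∀ x : Ed d × Ed d,
      -C₅ - |ε| * MG - (C₂ + Mν) * ‖x.2 - x.1‖ + α/2 * ‖x.2 - x.1‖^2 ≤ h x := by
    intro x
    have h1 := S_coercive hS hα0 hα hC₂ x.1 x.2
    have h2 : |S (x.1, x.1)| ≤ C₅ := by
      rw [← Real.norm_eq_abs]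
      exact hC₅ x.1
    have h3 : |ε * G x.1| ≤ |ε| * MG := by
      rw [abs_mul]
      apply mul_le_mul_of_nonneg_left _ (abs_nonneg ε)
      rw [← Real.norm_eq_abs]
      exact hMG x.1
    have h4 : |u x.1 - u x.2| ≤ Mν * ‖x.2 - x.1‖ := by
      rw [norm_sub_rev x.2 x.1]
      exact hulip x.1 x.2
    have h5 : (x.1, x.2) = x := rfl
    rw [hh]
    simp only
    have h6 := (abs_le.mp h2).1
    have h7 := (abs_le.mp h3).1
    have h8 := (abs_le.mp h4).1
    rw [h5] at h1
    nlinarith [h1]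
  -- minimum of h
  set Ka := C₂ + Mν with hKa
  set Kb := C₅ + |ε| * MG with hKb
  have hKa0 : 0 ≤ Ka := by positivity
  have hKb0 : 0 ≤ Kb := by positivity
  set z₀ : Ed d × Ed d := (0, g 0) with hz₀
  set μ₀ := h z₀ with hμ₀
  set D := max 1 ((2/α) * (Ka + |μ₀| + Kb + 1)) with hD
  have hD1 : (1:ℝ) ≤ D := le_max_left _ _
  have hDbig : ∀ x : Ed d × Ed d, D ≤ ‖x.2 - x.1‖ → μ₀ + 1 ≤ h x := by
    intro x hx
    have h1 := hcoer x
    set y := ‖x.2 - x.1‖ with hy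
    have hy1 : (1:ℝ) ≤ y := le_trans hD1 hx
    have h2 : (2/α) * (Ka + |μ₀| + Kb + 1) ≤ y := le_trans (le_max_right _ _) hx
    have h3 : Ka + |μ₀| + Kb + 1 ≤ α/2 * y := by
      rw [div_mul_eq_mul_div, le_div_iff₀ (by norm_num : (0:ℝ) < 2)]
      calc (Ka + |μ₀| + Kb + 1) * 2 = α * ((2/α) * (Ka + |μ₀| + Kb + 1)) := by
            field_simp
        _ ≤ α * y := by
            apply mul_le_mul_of_nonneg_left h2 hα0.le
    have h4 : (Ka + |μ₀| + Kb + 1) * y ≤ (α/2 * y) * y := by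
      apply mul_le_mul_of_nonneg_right h3
      linarith
    have h5 : (|μ₀| + Kb + 1) * (y - 1) ≥ 0 := by
      apply mul_nonneg _ (by linarith)
      positivity
    have h6 : μ₀ ≤ |μ₀| := le_abs_self μ₀
    have e1 : α/2 * y^2 = α/2*y*y := by ring
    generalize hH : h x = H at h1 ⊢
    generalize hM : |μ₀| = M at h4 h5 h6 ⊢
    clear_value y Ka Kb μ₀
    linarith [h1, h4, h5, h6, e1]
  set R₁ : ℝ := (d:ℝ) + 1 with hR₁
  set R₂ : ℝ := R₁ + D + ‖g 0‖ with hR₂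
  set Kcomp : Set (Ed d × Ed d) :=
    (Metric.closedBall (0 : Ed d) R₁) ×ˢ (Metric.closedBall (0 : Ed d) R₂) with hKcomp
  have hKc : IsCompact Kcomp := (isCompact_closedBall _ _).prod (isCompact_closedBall _ _)
  have hz₀K : z₀ ∈ Kcomp := by
    rw [hKcomp]
    constructor
    · show (0 : Ed d) ∈ Metric.closedBall (0 : Ed d) R₁
      exact Metric.mem_closedBall_self (by rw [hR₁]; positivity)
    · simp only [Metric.mem_closedBall, dist_zero_right]
      rw [hR₂]
      have : (0:ℝ) ≤ R₁ + D := by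
        rw [hR₁]
        positivity
      linarith
  obtain ⟨xs, hxsK, hxsmin⟩ := hKc.exists_isMinOn ⟨z₀, hz₀K⟩ hhcont.continuousOn
  have hglobal : ∀ x : Ed d × Ed d, h xs ≤ h x := by
    intro x
    obtain ⟨m, hm⟩ := exists_intVec_norm_le x.1
    set x' : Ed d × Ed d := (x.1 + intVec d m, x.2 + intVec d m) with hx'
    have hhx' : h x' = h x := by
      rw [hh]
      simp only
      rw [hSper m x.1 x.2, hGper m x.1, huper m x.1, huper m x.2]
      ring
    have hsub : x'.2 - x'.1 = x.2 - x.1 := by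
      rw [hx']
      exact add_sub_add_right_eq_sub _ _ _
    by_cases hcase : ‖x'.2 - x'.1‖ ≤ D
    · have hx'K : x' ∈ Kcomp := by
        rw [hKcomp, Set.mem_prod]
        constructor
        · simpa [Metric.mem_closedBall, dist_zero_right, hR₁] using hm
        · simp only [Metric.mem_closedBall, dist_zero_right]
          have h1 : ‖x'.2‖ ≤ ‖x'.2 - x'.1‖ + ‖x'.1‖ := by
            calc ‖x'.2‖ = ‖x'.2 - x'.1 + x'.1‖ := by rw [sub_add_cancel]
              _ ≤ ‖x'.2 - x'.1‖ + ‖x'.1‖ := norm_add_le _ _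
          have h2 : ‖x'.1‖ ≤ R₁ := by
            simpa [hR₁] using hm
          rw [hR₂]
          linarith [norm_nonneg (g 0), hcase]
      have h1 : h xs ≤ h x' := hxsmin hx'K
      linarith [hhx']
    · push_neg at hcase
      have h1 := hDbig x' hcase.le
      have h2 : h xs ≤ μ₀ := hxsmin hz₀K
      linarith [hhx']
  -- full derivative of h
  have hDh : ∀ z : Ed d × Ed d, HasFDerivAt h
      (fderiv ℝ S z + ε • ((fderiv ℝ G z.1).comp (ContinuousLinearMap.fst ℝ (Ed d) (Ed d)))
        + ((innerSL ℝ) (ν z.1)).comp (ContinuousLinearMap.fst ℝ (Ed d) (Ed d))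
        - ((innerSL ℝ) (ν z.2)).comp (ContinuousLinearMap.snd ℝ (Ed d) (Ed d))) z := by
    intro z
    have h1 : HasFDerivAt (fun x : Ed d × Ed d => S x) (fderiv ℝ S z) z :=
      (hSd z).hasFDerivAt
    have h2 : HasFDerivAt (fun x : Ed d × Ed d => ε * G x.1)
        (ε • ((fderiv ℝ G z.1).comp (ContinuousLinearMap.fst ℝ (Ed d) (Ed d)))) z := by
      have hG1 : HasFDerivAt (fun x : Ed d × Ed d => G x.1)
          ((fderiv ℝ G z.1).comp (ContinuousLinearMap.fst ℝ (Ed d) (Ed d))) z :=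
        ((hGd z.1).hasFDerivAt).comp z hasFDerivAt_fst
      exact hG1.const_mul ε
    have h3 : HasFDerivAt (fun x : Ed d × Ed d => u x.1)
        (((innerSL ℝ) (ν z.1)).comp (ContinuousLinearMap.fst ℝ (Ed d) (Ed d))) z :=
      (hu z.1).comp z hasFDerivAt_fst
    have h4 : HasFDerivAt (fun x : Ed d × Ed d => u x.2)
        (((innerSL ℝ) (ν z.2)).comp (ContinuousLinearMap.snd ℝ (Ed d) (Ed d))) z :=
      (hu z.2).comp z hasFDerivAt_snd
    exact ((h1.add h2).add h3).sub h4
  -- the minimiser lies on the graph manifold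
  have hloc : IsLocalMin h xs := Filter.Eventually.of_forall fun y => hglobal y
  have hgrad0 : fderiv ℝ h xs = 0 := hloc.fderiv_eq_zero
  have hDh0 : (fderiv ℝ S xs
      + ε • ((fderiv ℝ G xs.1).comp (ContinuousLinearMap.fst ℝ (Ed d) (Ed d)))
      + ((innerSL ℝ) (ν xs.1)).comp (ContinuousLinearMap.fst ℝ (Ed d) (Ed d))
      - ((innerSL ℝ) (ν xs.2)).comp (ContinuousLinearMap.snd ℝ (Ed d) (Ed d))) = 0 := by
    rw [← (hDh xs).fderiv]
    exact hgrad0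
  have hqside : ∀ v : Ed d,
      fderiv ℝ S xs (v, 0) + ε * (fderiv ℝ G xs.1 v) + ⟪ν xs.1, v⟫ = 0 := by
    intro v
    have h1 := congrArg (fun (L : (Ed d × Ed d) →L[ℝ] ℝ) => L ((v, 0) : Ed d × Ed d)) hDh0
    simpa using h1
  have hQsg : xs.2 = g xs.1 := by
    have hkey : fderiv ℝ S (xs.1, xs.2) (xs.2 - g xs.1, 0)
        = fderiv ℝ S (xs.1, g xs.1) (xs.2 - g xs.1, 0) := by
      have h1 := hqside (xs.2 - g xs.1)
      have h2 := hdq xs.1 (xs.2 - g xs.1)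
      have h3 : (xs.1, xs.2) = xs := rfl
      rw [h3]
      linarith
    have h1 := D1_strong_mono hS hα xs.1 xs.2 (g xs.1)
    rw [hkey, sub_self] at h1
    have h2 : ‖xs.2 - g xs.1‖^2 ≤ 0 := by nlinarith [h1, hα0]
    have h3 : ‖xs.2 - g xs.1‖ = 0 := by
      nlinarith [norm_nonneg (xs.2 - g xs.1), h2]
    rw [norm_eq_zero, sub_eq_zero] at h3
    exact h3
  -- h is constant on the graph manifold, and equal to the global minimum
  have hθ : ∀ q : Ed d, HasFDerivAt (fun q : Ed d => h (q, g q)) (0 : Ed d →L[ℝ] ℝ) q := by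
    intro q
    have hgd : HasFDerivAt g (fderiv ℝ g q) q := ((hgC1.differentiable one_ne_zero) q).hasFDerivAt
    have hcurve : HasFDerivAt (fun q : Ed d => ((q, g q) : Ed d × Ed d))
        ((ContinuousLinearMap.id ℝ (Ed d)).prod (fderiv ℝ g q)) q := (hasFDerivAt_id q).prodMk hgd
    have hcomp := (hDh (q, g q)).comp q hcurve
    have hzero : (fderiv ℝ S (q, g q)
        + ε • ((fderiv ℝ G q).comp (ContinuousLinearMap.fst ℝ (Ed d) (Ed d)))
        + ((innerSL ℝ) (ν q)).comp (ContinuousLinearMap.fst ℝ (Ed d) (Ed d))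
        - ((innerSL ℝ) (ν (g q))).comp (ContinuousLinearMap.snd ℝ (Ed d) (Ed d))) = 0 := by
      refine ContinuousLinearMap.ext fun vw => ?_
      have hsplit : (vw : Ed d × Ed d) = ((vw.1, 0) : Ed d × Ed d) + ((0, vw.2) : Ed d × Ed d) := by
        ext
        · simp
        · simp
      rw [ContinuousLinearMap.zero_apply, hsplit, map_add]
      have hv1 : (fderiv ℝ S (q, g q)
          + ε • ((fderiv ℝ G q).comp (ContinuousLinearMap.fst ℝ (Ed d) (Ed d)))
          + ((innerSL ℝ) (ν q)).comp (ContinuousLinearMap.fst ℝ (Ed d) (Ed d))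
          - ((innerSL ℝ) (ν (g q))).comp (ContinuousLinearMap.snd ℝ (Ed d) (Ed d)))
            ((vw.1, 0) : Ed d × Ed d) = 0 := by
        simp only [ContinuousLinearMap.add_apply, ContinuousLinearMap.sub_apply,
          ContinuousLinearMap.smul_apply, ContinuousLinearMap.comp_apply,
          ContinuousLinearMap.coe_fst', ContinuousLinearMap.coe_snd', innerSL_apply_apply,
          smul_eq_mul]
        have := hdq q vw.1
        simp only [inner_zero_right]
        linarith [this]
      have hv2 : (fderiv ℝ S (q, g q)
          + ε • ((fderiv ℝ G q).comp (ContinuousLinearMap.fst ℝ (Ed d) (Ed d)))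
          + ((innerSL ℝ) (ν q)).comp (ContinuousLinearMap.fst ℝ (Ed d) (Ed d))
          - ((innerSL ℝ) (ν (g q))).comp (ContinuousLinearMap.snd ℝ (Ed d) (Ed d)))
            ((0, vw.2) : Ed d × Ed d) = 0 := by
        simp only [ContinuousLinearMap.add_apply, ContinuousLinearMap.sub_apply,
          ContinuousLinearMap.smul_apply, ContinuousLinearMap.comp_apply,
          ContinuousLinearMap.coe_fst', ContinuousLinearMap.coe_snd', innerSL_apply_apply,
          smul_eq_mul]
        have := hdQ q vw.2
        simp only [inner_zero_right, map_zero, mul_zero]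
        linarith [this]
      rw [hv1, hv2]
      norm_num
    rw [hzero] at hcomp
    simp only [ContinuousLinearMap.zero_comp] at hcomp
    exact hcomp
  have hθconst := is_const_of_fderiv_eq_zero
    (fun q => (hθ q).differentiableAt) (fun q => (hθ q).fderiv)
  have hMmin : ∀ (q : Ed d) (x : Ed d × Ed d), h (q, g q) ≤ h x := by
    intro q x
    have h1 : h (q, g q) = h (xs.1, g xs.1) := hθconst q xs.1
    rw [h1, ← hQsg]
    exact hglobal x
  -- second-order test in the Q-direction
  have hA : ∀ q v : Ed d, ⟪fderiv ℝ ν (g q) v, v⟫ ≤ (hessQQ S q (g q) v) v := by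
    intro q v
    have hcurveq : ∀ t : ℝ, ((q, g q) : Ed d × Ed d) + t • ((0, v) : Ed d × Ed d)
        = (q, g q + t • v) := by
      intro t
      ext
      · simp
      · simp
    have hφd : ∀ t : ℝ, HasDerivAt (fun t : ℝ => h (q, g q + t • v))
        (fderiv ℝ S (((q, g q) : Ed d × Ed d) + t • ((0, v) : Ed d × Ed d)) ((0, v) : Ed d × Ed d)
          - (innerSL ℝ) v (ν (g q + t • v))) t := by
      intro t
      have hfun : (fun t : ℝ => h (q, g q + t • v))
          = fun t : ℝ => S (((q, g q) : Ed d × Ed d) + t • ((0, v) : Ed d × Ed d))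
            + (ε * G q + u q) - u (g q + t • v) := by
        funext s
        rw [hcurveq s, hh]
        simp only
        ring
      rw [hfun]
      have h1 : HasDerivAt
          (fun t : ℝ => S (((q, g q) : Ed d × Ed d) + t • ((0, v) : Ed d × Ed d)))
          (fderiv ℝ S (((q, g q) : Ed d × Ed d) + t • ((0, v) : Ed d × Ed d))
            ((0, v) : Ed d × Ed d)) t :=
        hasDerivAt_line hSd _ _ t
      have hcurve2 : HasDerivAt (fun t : ℝ => g q + t • v) v t := by
        simpa using ((hasDerivAt_id t).smul_const v).const_add (g q)
      have h2 : HasDerivAt (fun t : ℝ => u (g q + t • v))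
          ((innerSL ℝ) v (ν (g q + t • v))) t := by
        have h3 := (hu (g q + t • v)).comp_hasDerivAt t hcurve2
        have h4 : ((innerSL ℝ) (ν (g q + t • v))) v = ((innerSL ℝ) v) (ν (g q + t • v)) := by
          rw [innerSL_apply_apply, innerSL_apply_apply, real_inner_comm]
        rw [h4] at h3
        exact h3
      exact (h1.add_const (ε * G q + u q)).sub h2
    have hmin2 : ∀ t : ℝ, h (q, g q + (0:ℝ) • v) ≤ h (q, g q + t • v) := by
      intro t
      have h0 : g q + (0:ℝ) • v = g q := by simp
      rw [h0]
      exact hMmin q _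
    have hρ0 : fderiv ℝ S (((q, g q) : Ed d × Ed d) + (0:ℝ) • ((0, v) : Ed d × Ed d))
        ((0, v) : Ed d × Ed d) - (innerSL ℝ) v (ν (g q + (0:ℝ) • v)) = 0 := by
      rw [hcurveq 0]
      have h0 : g q + (0:ℝ) • v = g q := by simp
      rw [h0, hdQ q v, innerSL_apply_apply, real_inner_comm]
      ring
    have hρ'0 : HasDerivAt
        (fun t : ℝ => fderiv ℝ S (((q, g q) : Ed d × Ed d) + t • ((0, v) : Ed d × Ed d))
          ((0, v) : Ed d × Ed d) - (innerSL ℝ) v (ν (g q + t • v)))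
        ((fderiv ℝ (fderiv ℝ S) ((q, g q) : Ed d × Ed d) ((0, v) : Ed d × Ed d))
          ((0, v) : Ed d × Ed d) - (innerSL ℝ) v ((fderiv ℝ ν (g q)) v)) 0 := by
      have h1 := hasDerivAt_fderiv_line hS ((q, g q) : Ed d × Ed d)
        ((0, v) : Ed d × Ed d) ((0, v) : Ed d × Ed d) 0
      rw [zero_smul, add_zero] at h1
      have hcurve2 := hasDerivAt_line hνd (g q) v 0
      rw [zero_smul, add_zero] at hcurve2
      have h2 : HasDerivAt (fun t : ℝ => (innerSL ℝ) v (ν (g q + t • v)))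
          ((innerSL ℝ) v ((fderiv ℝ ν (g q)) v)) 0 :=
        ((innerSL ℝ) v).hasFDerivAt.comp_hasDerivAt 0 hcurve2
      exact h1.sub h2
    have hkey := deriv2_nonneg_of_min hφd hmin2 hρ0 hρ'0
    have h5 : (fderiv ℝ (fderiv ℝ S) ((q, g q) : Ed d × Ed d) ((0, v) : Ed d × Ed d))
        ((0, v) : Ed d × Ed d) = (hessQQ S q (g q) v) v := (hessQQ_apply hS q (g q) v).symm
    rw [innerSL_apply_apply, real_inner_comm] at hkey
    linarith [hkey, h5.le, h5.ge]
  -- second-order test in the q-direction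
  have hB : ∀ q v : Ed d,
      -((hessqq S q (g q) v) v) - ε * ((fderiv ℝ (fderiv ℝ G) q v) v)
        ≤ ⟪fderiv ℝ ν q v, v⟫ := by
    intro q v
    have hcurveq : ∀ t : ℝ, ((q, g q) : Ed d × Ed d) + t • ((v, 0) : Ed d × Ed d)
        = (q + t • v, g q) := by
      intro t
      ext
      · simp
      · simp
    have hφd : ∀ t : ℝ, HasDerivAt (fun t : ℝ => h (q + t • v, g q))
        (fderiv ℝ S (((q, g q) : Ed d × Ed d) + t • ((v, 0) : Ed d × Ed d)) ((v, 0) : Ed d × Ed d)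
          + ε * (fderiv ℝ G (q + t • v) v) + (innerSL ℝ) v (ν (q + t • v))) t := by
      intro t
      have hfun : (fun t : ℝ => h (q + t • v, g q))
          = fun t : ℝ => S (((q, g q) : Ed d × Ed d) + t • ((v, 0) : Ed d × Ed d))
            + ε * G (q + t • v) + u (q + t • v) - u (g q) := by
        funext s
        rw [hcurveq s, hh]
      rw [hfun]
      have h1 : HasDerivAt
          (fun t : ℝ => S (((q, g q) : Ed d × Ed d) + t • ((v, 0) : Ed d × Ed d)))
          (fderiv ℝ S (((q, g q) : Ed d × Ed d) + t • ((v, 0) : Ed d × Ed d))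
            ((v, 0) : Ed d × Ed d)) t :=
        hasDerivAt_line hSd _ _ t
      have hcurve2 : HasDerivAt (fun t : ℝ => q + t • v) v t := by
        simpa using ((hasDerivAt_id t).smul_const v).const_add q
      have h2 : HasDerivAt (fun t : ℝ => ε * G (q + t • v)) (ε * (fderiv ℝ G (q + t • v) v)) t := by
        have h3 := hasDerivAt_line hGd q v t
        exact h3.const_mul ε
      have h4 : HasDerivAt (fun t : ℝ => u (q + t • v))
          ((innerSL ℝ) v (ν (q + t • v))) t := by
        have h3 := (hu (q + t • v)).comp_hasDerivAt t hcurve2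
        have h5 : ((innerSL ℝ) (ν (q + t • v))) v = ((innerSL ℝ) v) (ν (q + t • v)) := by
          rw [innerSL_apply_apply, innerSL_apply_apply, real_inner_comm]
        rw [h5] at h3
        exact h3
      exact ((h1.add h2).add h4).sub_const (u (g q))
    have hmin2 : ∀ t : ℝ, h (q + (0:ℝ) • v, g q) ≤ h (q + t • v, g q) := by
      intro t
      have h0 : q + (0:ℝ) • v = q := by simp
      rw [h0]
      exact hMmin q _
    have hρ0 : fderiv ℝ S (((q, g q) : Ed d × Ed d) + (0:ℝ) • ((v, 0) : Ed d × Ed d))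
        ((v, 0) : Ed d × Ed d) + ε * (fderiv ℝ G (q + (0:ℝ) • v) v)
        + (innerSL ℝ) v (ν (q + (0:ℝ) • v)) = 0 := by
      rw [hcurveq 0]
      have h0 : q + (0:ℝ) • v = q := by simp
      rw [h0, innerSL_apply_apply, real_inner_comm]
      have := hdq q v
      linarith
    have hρ'0 : HasDerivAt
        (fun t : ℝ => fderiv ℝ S (((q, g q) : Ed d × Ed d) + t • ((v, 0) : Ed d × Ed d))
          ((v, 0) : Ed d × Ed d) + ε * (fderiv ℝ G (q + t • v) v)
          + (innerSL ℝ) v (ν (q + t • v)))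
        ((fderiv ℝ (fderiv ℝ S) ((q, g q) : Ed d × Ed d) ((v, 0) : Ed d × Ed d))
          ((v, 0) : Ed d × Ed d) + ε * ((fderiv ℝ (fderiv ℝ G) q v) v)
          + (innerSL ℝ) v ((fderiv ℝ ν q) v)) 0 := by
      have h1 := hasDerivAt_fderiv_line hS ((q, g q) : Ed d × Ed d)
        ((v, 0) : Ed d × Ed d) ((v, 0) : Ed d × Ed d) 0
      rw [zero_smul, add_zero] at h1
      have h2 := hasDerivAt_fderiv_line hGreg q v v 0
      rw [zero_smul, add_zero] at h2
      have h2' := h2.const_mul ε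
      have hcurve2 := hasDerivAt_line hνd q v 0
      rw [zero_smul, add_zero] at hcurve2
      have h3 : HasDerivAt (fun t : ℝ => (innerSL ℝ) v (ν (q + t • v)))
          ((innerSL ℝ) v ((fderiv ℝ ν q) v)) 0 :=
        ((innerSL ℝ) v).hasFDerivAt.comp_hasDerivAt 0 hcurve2
      exact (h1.add h2').add h3
    have hkey := deriv2_nonneg_of_min hφd hmin2 hρ0 hρ'0
    have h5 : (fderiv ℝ (fderiv ℝ S) ((q, g q) : Ed d × Ed d) ((v, 0) : Ed d × Ed d))
        ((v, 0) : Ed d × Ed d) = (hessqq S q (g q) v) v := (hessqq_apply hS q (g q) v).symm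
    rw [innerSL_apply_apply, real_inner_comm] at hkey
    linarith [hkey, h5.le, h5.ge]
  constructor
  · intro Q v
    obtain ⟨q, hq⟩ := hsurj Q
    have h1 := hA q v
    rw [hq] at h1
    have h3 : ‖(hessQQ S q Q v) v‖ ≤ ‖hessQQ S q Q‖ * ‖v‖ * ‖v‖ := by
      calc ‖(hessQQ S q Q v) v‖ ≤ ‖hessQQ S q Q v‖ * ‖v‖ := ContinuousLinearMap.le_opNorm _ _
        _ ≤ ‖hessQQ S q Q‖ * ‖v‖ * ‖v‖ :=
            mul_le_mul_of_nonneg_right (ContinuousLinearMap.le_opNorm _ _) (norm_nonneg v)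
    have h4 : ‖hessQQ S q Q‖ ≤ C := by
      have h6 := hC q Q
      have h7 := norm_nonneg (hessqq S q Q)
      linarith
    have h5 := (abs_le.mp (by rwa [Real.norm_eq_abs] at h3)).2
    have h6 : ‖hessQQ S q Q‖ * ‖v‖ * ‖v‖ ≤ C * ‖v‖^2 := by
      have h7 : ‖hessQQ S q Q‖ * ‖v‖ * ‖v‖ = ‖hessQQ S q Q‖ * ‖v‖^2 := by ring
      rw [h7]
      exact mul_le_mul_of_nonneg_right h4 (by positivity)
    linarith
  · intro q v
    have h1 := hB q v
    have h3 : ‖(hessqq S q (g q) v) v‖ ≤ ‖hessqq S q (g q)‖ * ‖v‖ * ‖v‖ := by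
      calc ‖(hessqq S q (g q) v) v‖ ≤ ‖hessqq S q (g q) v‖ * ‖v‖ :=
            ContinuousLinearMap.le_opNorm _ _
        _ ≤ ‖hessqq S q (g q)‖ * ‖v‖ * ‖v‖ :=
            mul_le_mul_of_nonneg_right (ContinuousLinearMap.le_opNorm _ _) (norm_nonneg v)
    have h4 : ‖hessqq S q (g q)‖ ≤ C := by
      have h6 := hC q (g q)
      have h7 := norm_nonneg (hessQQ S q (g q))
      linarith
    have h5 := (abs_le.mp (by rwa [Real.norm_eq_abs] at h3)).2
    have h6 : ‖hessqq S q (g q)‖ * ‖v‖ * ‖v‖ ≤ C * ‖v‖^2 := by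
      have h7 : ‖hessqq S q (g q)‖ * ‖v‖ * ‖v‖ = ‖hessqq S q (g q)‖ * ‖v‖^2 := by ring
      rw [h7]
      exact mul_le_mul_of_nonneg_right h4 (by positivity)
    linarith

end AuxST19e

open RealInnerProductSpace in
/-- Proposition C.2 of the paper. Let `f` be a strongly positive
symplectic twist map of `𝕋^d × ℝ^d` with bounded rate, `G ∈ C²(𝕋^d)` and `(F_ε)` lifts
of the twist maps `f_ε` generated by `S_ε = S + εG`. Then: (i) for every `ε₀ ≥ 0` there
is `K(ε₀) ≥ 0` such that every `C¹` Lagrangian graph invariant by some `f_ε` with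
`|ε| ≤ ε₀` is Lipschitz with Lipschitz constant `K(ε₀)`; (ii) if `G` is not constant
there is `Λ > 0` such that for `|ε| ≥ Λ` the map `f_ε` admits no `C¹` Lagrangian
invariant graph. -/
theorem statement19 (d : ℕ) (F : Ed d × Ed d → Ed d × Ed d) (S : Ed d × Ed d → ℝ)
    (G : Ed d → ℝ) (hGreg : ContDiff ℝ 2 G) (hGper : ZdPeriodicFun G)
    (Fε : ℝ → Ed d × Ed d → Ed d × Ed d)
    (hFS : IsSymplecticTwistLift F S)
    (hfam : ∀ ε : ℝ, IsSymplecticTwistLift (Fε ε) fun x => S x + ε * G x.1)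
    (hpos : StronglyPositiveGenFun S)
    (hrate : BoundedRateGenFun S) :
    (∀ ε₀ : ℝ, 0 ≤ ε₀ → ∃ K : NNReal, ∀ ε : ℝ, |ε| ≤ ε₀ →
      ∀ ν : Ed d → Ed d, ContDiff ℝ 1 ν → ZdPeriodic ν → IsLagrangianGraph ν →
        (Fε ε) '' graphSet ν = graphSet ν → LipschitzWith K ν) ∧
    ((∃ q q' : Ed d, G q ≠ G q') → ∃ Λ : ℝ, 0 < Λ ∧ ∀ ε : ℝ, Λ ≤ |ε| →
      ¬ ∃ ν : Ed d → Ed d, ContDiff ℝ 1 ν ∧ ZdPeriodic ν ∧ IsLagrangianGraph ν ∧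
        (Fε ε) '' graphSet ν = graphSet ν) := by
  obtain ⟨hSreg, hposr⟩ := hpos
  obtain ⟨α, β, hα0, hβ0, hmix⟩ := hposr
  have hα : ∀ q Q v : Ed d, mixedS S q Q v ≤ -α * ‖v‖^2 := fun q Q v => (hmix q Q v).2
  obtain ⟨-, C, hC⟩ := hrate
  have hC0 : 0 ≤ C := by
    have h0 := hC 0 0
    have h1 := norm_nonneg (hessqq S 0 0)
    have h2 := norm_nonneg (hessQQ S 0 0)
    linarith
  have hSper := hFS.genfun.periodic
  have hGd : Differentiable ℝ G := hGreg.differentiable (by norm_num)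
  have hG1per : ∀ (m : Fin d → ℤ) (x : Ed d),
      fderiv ℝ G (x + intVec d m) = fderiv ℝ G x :=
    fun m x => periodic_fderiv hGd (fun y => hGper m y) x
  have hG1reg : ContDiff ℝ 1 (fderiv ℝ G) := hGreg.fderiv_right (by norm_num)
  have hG1d : Differentiable ℝ (fderiv ℝ G) := hG1reg.differentiable one_ne_zero
  have hG2per : ∀ (m : Fin d → ℤ) (x : Ed d),
      fderiv ℝ (fderiv ℝ G) (x + intVec d m) = fderiv ℝ (fderiv ℝ G) x :=
    fun m x => periodic_fderiv hG1d (fun y => hG1per m y) x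
  have hG2cont : Continuous (fderiv ℝ (fderiv ℝ G)) := hG1reg.continuous_fderiv one_ne_zero
  obtain ⟨ΓG, hΓG0, hΓG⟩ := bounded_of_periodic hG2cont hG2per
  have hG2bd : ∀ (x w : Ed d), ‖(fderiv ℝ (fderiv ℝ G) x w) w‖ ≤ ΓG * ‖w‖^2 := by
    intro x w
    calc ‖(fderiv ℝ (fderiv ℝ G) x w) w‖ ≤ ‖fderiv ℝ (fderiv ℝ G) x w‖ * ‖w‖ :=
          ContinuousLinearMap.le_opNorm _ _
      _ ≤ ‖fderiv ℝ (fderiv ℝ G) x‖ * ‖w‖ * ‖w‖ :=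
          mul_le_mul_of_nonneg_right (ContinuousLinearMap.le_opNorm _ _) (norm_nonneg w)
      _ ≤ ΓG * ‖w‖ * ‖w‖ := by
          apply mul_le_mul_of_nonneg_right _ (norm_nonneg w)
          exact mul_le_mul_of_nonneg_right (hΓG x) (norm_nonneg w)
      _ = ΓG * ‖w‖^2 := by ring
  constructor
  · -- part (i)
    intro ε₀ hε₀
    refine ⟨Real.toNNReal (C + ε₀ * ΓG), ?_⟩
    intro ε hε ν hν hper hLag hinv
    obtain ⟨hub, hlb⟩ := invariant_graph_bounds S G ε hGreg hGper (Fε ε) (hfam ε)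
      hSreg hSper hα0 hα hC ν hν hper hLag hinv
    have hsymm := fderiv_symm_of_lagrangian hν hLag
    have hKb : (0:ℝ) ≤ C + ε₀ * ΓG := by positivity
    have hop : ∀ x : Ed d, ‖fderiv ℝ ν x‖ ≤ C + ε₀ * ΓG := by
      intro x
      apply opNorm_le_of_symmetric hKb (fun v w => hsymm x v w)
      intro v
      rw [abs_le]
      constructor
      · have h1 := hlb x v
        have h2 : |ε * ((fderiv ℝ (fderiv ℝ G) x v) v)| ≤ ε₀ * (ΓG * ‖v‖^2) := by
          rw [abs_mul]
          apply mul_le_mul hε _ (abs_nonneg _) (le_trans (abs_nonneg ε) hε)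
          rw [← Real.norm_eq_abs]
          exact hG2bd x v
        have h3 := (abs_le.mp h2).2
        nlinarith [h1, h3]
      · have h1 := hub x v
        have h2 : (0:ℝ) ≤ ε₀ * ΓG * ‖v‖^2 := by positivity
        nlinarith [h1, h2]
    apply lipschitzWith_of_nnnorm_fderiv_le (hν.differentiable one_ne_zero)
    intro x
    have h2 : Real.toNNReal ‖fderiv ℝ ν x‖ ≤ Real.toNNReal (C + ε₀ * ΓG) :=
      Real.toNNReal_mono (hop x)
    rwa [Real.toNNReal_eq_nnnorm_of_nonneg (norm_nonneg _), nnnorm_norm] at h2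
  · -- part (ii)
    rintro ⟨q0, q0', hGne⟩
    have hgradne : ∃ q₁ : Ed d, fderiv ℝ G q₁ ≠ 0 := by
      by_contra hcon
      push_neg at hcon
      exact hGne (is_const_of_fderiv_eq_zero hGd hcon q0 q0')
    obtain ⟨q₁, hq₁⟩ := hgradne
    have hvex : ∃ v : Ed d, fderiv ℝ G q₁ v ≠ 0 := by
      by_contra hcon
      push_neg at hcon
      exact hq₁ (ContinuousLinearMap.ext fun w => by
        rw [hcon w, ContinuousLinearMap.zero_apply])
    obtain ⟨v, hv⟩ := hvex
    set a := fderiv ℝ G q₁ v with ha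
    have ha2 : 0 < a^2 := by positivity
    obtain ⟨MG, hMG0, hMGb⟩ := bounded_of_periodic hGreg.continuous hGper
    set B : ℝ := 2*C*‖v‖^2 + 1 with hB
    have hBpos : 0 < B := by positivity
    refine ⟨4*MG*B/a^2 + 1, by positivity, ?_⟩
    rintro ε hεΛ ⟨ν, hν, hper, hLag, hinv⟩
    obtain ⟨hub, hlb⟩ := invariant_graph_bounds S G ε hGreg hGper (Fε ε) (hfam ε)
      hSreg hSper hα0 hα hC ν hν hper hLag hinv
    have hεpos : 0 < |ε| := by
      have h1 : (0:ℝ) < 4*MG*B/a^2 + 1 := by positivity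
      linarith
    have hkey : ∀ q w : Ed d, -(2*C*‖w‖^2) ≤ ε * ((fderiv ℝ (fderiv ℝ G) q w) w) := by
      intro q w
      have h1 := hlb q w
      have h2 := hub q w
      linarith
    set σ : ℝ := if 0 ≤ ε * a then 1 else -1 with hσ
    have hσnorm : ‖σ • v‖ = ‖v‖ := by
      rw [norm_smul, Real.norm_eq_abs, hσ]
      split_ifs <;> simp
    have hfd : ∀ s : ℝ, HasDerivAt (fun s : ℝ => ε * G (q₁ + s • (σ • v)))
        (ε * (fderiv ℝ G (q₁ + s • (σ • v)) (σ • v))) s :=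
      fun s => (hasDerivAt_line hGd q₁ (σ • v) s).const_mul ε
    have hf'd : ∀ s : ℝ, HasDerivAt (fun s : ℝ => ε * (fderiv ℝ G (q₁ + s • (σ • v)) (σ • v)))
        (ε * ((fderiv ℝ (fderiv ℝ G) (q₁ + s • (σ • v)) (σ • v)) (σ • v))) s :=
      fun s => (hasDerivAt_fderiv_line hGreg q₁ (σ • v) (σ • v) s).const_mul ε
    have hf''B : ∀ s : ℝ,
        -B ≤ ε * ((fderiv ℝ (fderiv ℝ G) (q₁ + s • (σ • v)) (σ • v)) (σ • v)) := by
      intro s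
      have h1 := hkey (q₁ + s • (σ • v)) (σ • v)
      rw [hσnorm] at h1
      rw [hB]
      linarith
    have hfM : ∀ s : ℝ, |ε * G (q₁ + s • (σ • v))| ≤ |ε| * MG := by
      intro s
      rw [abs_mul]
      apply mul_le_mul_of_nonneg_left _ (abs_nonneg ε)
      rw [← Real.norm_eq_abs]
      exact hMGb _
    have hf'0 : ε * (fderiv ℝ G (q₁ + (0:ℝ) • (σ • v)) (σ • v)) = |ε * a| := by
      have he : q₁ + (0:ℝ) • (σ • v) = q₁ := by simp
      rw [he, ContinuousLinearMap.map_smul, smul_eq_mul, ← ha, hσ]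
      split_ifs with hcase
      · rw [abs_of_nonneg hcase]
        ring
      · push_neg at hcase
        rw [abs_of_neg hcase]
        ring
    have h0f : 0 ≤ ε * (fderiv ℝ G (q₁ + (0:ℝ) • (σ • v)) (σ • v)) := by
      rw [hf'0]
      positivity
    have hmain := sq_deriv_le_of_bounded hfd hf'd hf''B hBpos hfM h0f
    rw [hf'0] at hmain
    have habs : |ε * a|^2 = ε^2 * a^2 := by
      rw [abs_mul, mul_pow, sq_abs, sq_abs]
    rw [habs] at hmain
    have hsq : ε^2 = |ε|^2 := (sq_abs ε).symm
    rw [hsq] at hmain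
    -- |ε|² a² ≤ 4 (|ε| MG) B  ⟹  |ε| a² ≤ 4 MG B
    have hstep : |ε| * a^2 ≤ 4 * MG * B := by
      nlinarith [hmain, hεpos]
    have hcontr : |ε| ≤ 4*MG*B/a^2 := by
      rw [le_div_iff₀ ha2]
      exact hstep
    linarith

end
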